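/- arXiv:2507.14410 — 3 statements merged into one kernel-verified Lean document; each statement's English description precedes it below -/
import Mathlib

section
/- For all n ≥ 2, √θ_{n+1} - √θ_n < ln(p_n)/√p_n, where θ_n = ∑_{i=1}^n ln(p_i). -/
open Nat Real Finset

noncomputable def p (n : ℕ) : ℕ := Nat.nth Nat.Prime (n - 1)
noncomputable def θ (n : ℕ) : ℝ := ∑ i ∈ Finset.Icc 1 n, Real.log (p i)
lemma nth_prime_mono : StrictMono (Nat.nth Nat.Prime) := Nat.nth_strictMono Nat.infinite_setOf_prime
lemma p_prime {n : ℕ} : Nat.Prime (p n) := Nat.prime_nth_prime _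
lemma p_two_le {n : ℕ} : 2 ≤ p n := p_prime.two_le
lemma theta_succ (n : ℕ) : θ (n+1) = θ n + Real.log (p (n+1)) := by
  rw [θ, θ, Finset.sum_Icc_succ_top (by omega)]

lemma nth_le_of_prime {q : ℕ} (hq : Nat.Prime q) (k : ℕ) (h : Nat.nth Nat.Prime k < q) :
    Nat.nth Nat.Prime (k+1) ≤ q := by
  have h1 : Nat.nth Nat.Prime (Nat.count Nat.Prime q) = q := Nat.nth_count hq
  have h2 : k < Nat.count Nat.Prime q := by
    by_contra hc
    push_neg at hc
    exact absurd (h1 ▸ nth_prime_mono.le_iff_le.mpr hc) (by omega)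
  exact h1 ▸ nth_prime_mono.le_iff_le.mpr h2

lemma nth_succ_eq {k q r : ℕ} (hq : Nat.nth Nat.Prime k = q) (hr : Nat.Prime r) (hqr : q < r)
    (hno : ∀ m ∈ Finset.Ioo q r, ¬ Nat.Prime m) : Nat.nth Nat.Prime (k+1) = r := by
  have h1 : Nat.nth Nat.Prime (k+1) ≤ r := nth_le_of_prime hr k (hq ▸ hqr)
  have h2 : q < Nat.nth Nat.Prime (k+1) := hq ▸ nth_prime_mono (Nat.lt_succ_self k)
  rcases eq_or_lt_of_le h1 with h | h
  · exact h
  · exact absurd (Nat.nth_mem_of_infinite Nat.infinite_setOf_prime (k+1))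
      (hno _ (Finset.mem_Ioo.mpr ⟨h2, h⟩))

/-- Bertrand step -/
lemma p_succ_lt {n : ℕ} (hn : 1 ≤ n) : p (n+1) < 2 * p n := by
  obtain ⟨q, hq, h1, h2⟩ := Nat.exists_prime_lt_and_le_two_mul (p n) (by have := @p_two_le n; omega)
  have hp1 : p (n+1) = Nat.nth Nat.Prime ((n-1)+1) := by
    simp only [p]; congr 1; omega
  have hle : p (n+1) ≤ q := by rw [hp1]; exact nth_le_of_prime hq _ h1
  rcases lt_or_eq_of_le (le_trans hle h2) with h | h
  · exact h
  · exfalso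
    have hprime : Nat.Prime (2 * p n) := h ▸ @p_prime (n+1)
    have := @p_two_le n
    rcases (Nat.Prime.eq_one_or_self_of_dvd hprime 2 ⟨p n, rfl⟩) with h' | h' <;> omega

lemma theta_pos {n : ℕ} (hn : 1 ≤ n) : 0 < θ n := by
  have h1 : ∀ i ∈ Finset.Icc 1 n, (0:ℝ) ≤ Real.log (p i) := fun i _ =>
    Real.log_nonneg (by exact_mod_cast le_trans one_le_two p_two_le)
  have h2 : (1:ℕ) ∈ Finset.Icc 1 n := Finset.mem_Icc.mpr ⟨le_refl 1, hn⟩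
  have h3 : (0:ℝ) < Real.log (p 1) := by
    apply Real.log_pos
    exact_mod_cast p_prime.one_lt
  calc (0:ℝ) < Real.log (p 1) := h3
    _ ≤ θ n := Finset.single_le_sum h1 h2

lemma log_p_pos {n : ℕ} : 0 < Real.log (p n) := Real.log_pos (by exact_mod_cast p_prime.one_lt)

/-- main reduction: the key inequality implies the goal -/
lemma main_of_key {n : ℕ} (hn : 1 ≤ n)
    (hkey : Real.sqrt (p n) * Real.log (p (n+1)) < (Real.sqrt (θ n) + Real.sqrt (θ (n+1))) * Real.log (p n)) :
    Real.sqrt (θ (n+1)) - Real.sqrt (θ n) < Real.log (p n) / Real.sqrt (p n) := by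
  have hθn := theta_pos hn
  have hθn1 : θ n < θ (n+1) := by
    rw [theta_succ]; linarith [@log_p_pos (n+1)]
  have hD : 0 < Real.sqrt (θ n) + Real.sqrt (θ (n+1)) := by
    have := Real.sqrt_pos.mpr hθn; have := Real.sqrt_pos.mpr (hθn.trans hθn1); linarith
  have hsp : 0 < Real.sqrt (p n) := Real.sqrt_pos.mpr (by exact_mod_cast p_prime.pos)
  have hdiff : Real.sqrt (θ (n+1)) - Real.sqrt (θ n)
      = Real.log (p (n+1)) / (Real.sqrt (θ n) + Real.sqrt (θ (n+1))) := by
    rw [eq_div_iff (ne_of_gt hD)]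
    have e1 : Real.sqrt (θ (n+1)) ^ 2 = θ (n+1) := Real.sq_sqrt (by linarith)
    have e2 : Real.sqrt (θ n) ^ 2 = θ n := Real.sq_sqrt hθn.le
    have : θ (n+1) - θ n = Real.log (p (n+1)) := by rw [theta_succ]; ring
    nlinarith [e1, e2]
  rw [hdiff, div_lt_div_iff₀ hD hsp]
  linarith [hkey]

/-- the square form implies key -/
lemma key_of_sq {n : ℕ} (hn : 1 ≤ n)
    (h : (p n : ℝ) * (Real.log (2 * p n))^2 ≤ 4 * θ n * (Real.log (p n))^2) :
    Real.sqrt (p n) * Real.log (p (n+1)) < (Real.sqrt (θ n) + Real.sqrt (θ (n+1))) * Real.log (p n) := by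
  have hθn := theta_pos hn
  have hθn1 : θ n ≤ θ (n+1) := by rw [theta_succ]; linarith [@log_p_pos (n+1)]
  have h2p : (1:ℝ) ≤ 2 * (p n : ℝ) := by
    have := @p_two_le n; have : (2:ℝ) ≤ (p n : ℝ) := by exact_mod_cast this
    linarith
  have hlog2p : 0 ≤ Real.log (2 * p n) := Real.log_nonneg h2p
  have hstrict : Real.log (p (n+1)) < Real.log (2 * (p n:ℝ)) := by
    apply Real.log_lt_log (by exact_mod_cast (@p_prime (n+1)).pos)
    have := p_succ_lt hn
    exact_mod_cast this
  have hsq : Real.sqrt (p n) * Real.log (2 * p n) ≤ 2 * Real.sqrt (θ n) * Real.log (p n) := by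
    have h1 : Real.sqrt ((p n : ℝ) * (Real.log (2 * p n))^2) ≤ Real.sqrt (4 * θ n * (Real.log (p n))^2) :=
      Real.sqrt_le_sqrt h
    rw [Real.sqrt_mul (by positivity), Real.sqrt_sq hlog2p] at h1
    have h4 : (4:ℝ) * θ n * (Real.log (p n))^2 = (2 * Real.sqrt (θ n) * Real.log (p n))^2 := by
      have := Real.sq_sqrt hθn.le
      nlinarith [this]
    rw [h4, Real.sqrt_sq (by positivity)] at h1
    exact h1
  have hsp : 0 < Real.sqrt (p n) := Real.sqrt_pos.mpr (by exact_mod_cast p_prime.pos)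
  have hmono : Real.sqrt (θ n) ≤ Real.sqrt (θ (n+1)) := Real.sqrt_le_sqrt hθn1
  calc Real.sqrt (p n) * Real.log (p (n+1))
      < Real.sqrt (p n) * Real.log (2 * (p n:ℝ)) := by
        exact mul_lt_mul_of_pos_left hstrict hsp
    _ ≤ 2 * Real.sqrt (θ n) * Real.log (p n) := hsq
    _ ≤ (Real.sqrt (θ n) + Real.sqrt (θ (n+1))) * Real.log (p n) := by
        nlinarith [log_p_pos (n := n), Real.sqrt_nonneg (θ n)]
theorem centralBinom_le (n : ℕ) (n_pos : 0 < n) :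
    centralBinom n ≤ (2 * n) ^ Nat.sqrt (2 * n) * primorial (2 * n) := by
  have n2_pos : 1 ≤ 2 * n := by omega
  let S := (Finset.range (2 * n + 1)).filter Nat.Prime
  let f x := x ^ n.centralBinom.factorization x
  have hS : ∏ x ∈ S, f x = ∏ x ∈ Finset.range (2 * n + 1), f x := by
    refine Finset.prod_filter_of_ne fun p _ h => ?_
    contrapose! h; dsimp only [f]
    rw [factorization_eq_zero_of_not_prime n.centralBinom h, _root_.pow_zero]
  rw [← n.prod_pow_factorization_centralBinom, ← hS,
    ← Finset.prod_filter_mul_prod_filter_not S (· ≤ Nat.sqrt (2 * n))]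
  apply mul_le_mul'
  · refine (Finset.prod_le_prod' fun p _ => (?_ : f p ≤ 2 * n)).trans ?_
    · exact pow_factorization_choose_le (by omega)
    have : (Finset.Icc 1 (Nat.sqrt (2 * n))).card = Nat.sqrt (2 * n) := by
      rw [Nat.card_Icc, Nat.add_sub_cancel]
    rw [Finset.prod_const]
    refine pow_right_mono₀ n2_pos ((Finset.card_le_card fun x hx => ?_).trans this.le)
    obtain ⟨h1, h2⟩ := Finset.mem_filter.1 hx
    exact Finset.mem_Icc.mpr ⟨(Finset.mem_filter.1 h1).2.one_lt.le, h2⟩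
  · rw [primorial]
    refine (Finset.prod_le_prod' fun p hp => (?_ : f p ≤ p)).trans ?_
    · obtain ⟨h1, h2⟩ := Finset.mem_filter.1 hp
      refine (pow_right_mono₀ (Finset.mem_filter.1 h1).2.one_lt.le ?_).trans (pow_one p).le
      exact Nat.factorization_choose_le_one (sqrt_lt'.mp <| not_le.1 h2)
    refine Finset.prod_le_prod_of_subset_of_one_le' ?_ ?_
    · intro x hx
      exact (Finset.mem_filter.1 hx).1
    · exact fun p hp _ => (Finset.mem_filter.1 hp).2.one_lt.le
lemma theta_eq_log_prod (n : ℕ) : θ n = Real.log (∏ i ∈ Finset.Icc 1 n, (p i : ℝ)) := by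
  rw [Real.log_prod]
  · rfl
  · intro i _
    have : (0:ℝ) < (p i : ℝ) := by exact_mod_cast (@p_prime i).pos
    exact ne_of_gt this

/-- every prime ≤ p n is among p 1, ..., p n -/
lemma primorial_le_prod {n N : ℕ} (hn : 1 ≤ n) (hN : N ≤ p n) :
    primorial N ≤ ∏ i ∈ Finset.Icc 1 n, p i := by
  rw [primorial]
  set T := (Finset.range (N + 1)).filter Nat.Prime with hT
  have key : ∏ q ∈ T, q = ∏ i ∈ T.image (fun q => Nat.count Nat.Prime q + 1), p i := by
    rw [Finset.prod_image]
    · refine Finset.prod_congr rfl fun q hq => ?_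
      have hq' : Nat.Prime q := (Finset.mem_filter.1 hq).2
      simp only [p, Nat.add_sub_cancel]
      exact (Nat.nth_count hq').symm
    · intro a ha b hb hab
      have ha' : Nat.Prime a := (Finset.mem_filter.1 ha).2
      have hb' : Nat.Prime b := (Finset.mem_filter.1 hb).2
      have : Nat.count Nat.Prime a = Nat.count Nat.Prime b := by simp only at hab; omega
      calc a = Nat.nth Nat.Prime (Nat.count Nat.Prime a) := (Nat.nth_count ha').symm
        _ = Nat.nth Nat.Prime (Nat.count Nat.Prime b) := by rw [this]
        _ = b := Nat.nth_count hb'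
  rw [key]
  refine Finset.prod_le_prod_of_subset_of_one_le' ?_ (fun i _ _ => (one_le_two.trans p_two_le))
  intro i hi
  obtain ⟨q, hq, rfl⟩ := Finset.mem_image.1 hi
  have hq1 : q ∈ Finset.range (N+1) := (Finset.mem_filter.1 hq).1
  have hq' : Nat.Prime q := (Finset.mem_filter.1 hq).2
  have hqN : q ≤ N := Finset.mem_range_succ_iff.1 hq1
  have hqpn : q ≤ p n := le_trans hqN hN
  have hcnt : Nat.count Nat.Prime q ≤ n - 1 := by
    by_contra hc
    push_neg at hc
    have : p n < q := lt_of_lt_of_le (nth_prime_mono hc) (le_of_eq (Nat.nth_count hq'))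
    omega
  exact Finset.mem_Icc.mpr ⟨by omega, by omega⟩

lemma log_primorial_le_theta {n N : ℕ} (hn : 1 ≤ n) (hN : N ≤ p n) :
    Real.log (primorial N) ≤ θ n := by
  rw [theta_eq_log_prod]
  apply Real.log_le_log (by exact_mod_cast primorial_pos N)
  push_cast
  exact_mod_cast Nat.cast_le.mpr (primorial_le_prod hn hN)
lemma lemA {x : ℝ} (hx : 283 ≤ x) :
    x * (Real.log x + Real.log 2)^2
      ≤ 4 * ((x-1) * Real.log 2 - (1 + Real.sqrt x) * Real.log x) * (Real.log x)^2 := by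
  have hx0 : (0:ℝ) < x := by linarith
  set s := Real.sqrt x with hs
  set t := Real.log x with ht
  have hs2 : s^2 = x := Real.sq_sqrt hx0.le
  have hs0 : 0 < s := Real.sqrt_pos.mpr hx0
  have hl2lo : 0.6931471803 < Real.log 2 := Real.log_two_gt_d9
  have hl2hi : Real.log 2 < 0.6931471808 := Real.log_two_lt_d9
  -- lower bound on t
  have ht_lo : 8.125 * Real.log 2 ≤ t := by
    have hpow : (2:ℝ)^(130:ℕ) ≤ 283^(16:ℕ) := by norm_num
    have h1 : Real.log ((2:ℝ)^(130:ℕ)) ≤ Real.log ((283:ℝ)^(16:ℕ)) :=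
      Real.log_le_log (by positivity) hpow
    rw [Real.log_pow, Real.log_pow] at h1
    have h2 : Real.log 283 ≤ Real.log x := Real.log_le_log (by norm_num) hx
    push_cast at h1
    nlinarith
  have ht0 : 0 < t := by nlinarith
  -- step 1 : square bound
  have h1 : (t + Real.log 2)^2 ≤ 1.2614 * t^2 := by nlinarith
  -- upper bound on t via s
  have hlog17 : Real.log 17 ≤ 4.125 * Real.log 2 := by
    have hpow : (17:ℝ)^(16:ℕ) ≤ 2^(66:ℕ) := by norm_num
    have h1 : Real.log ((17:ℝ)^(16:ℕ)) ≤ Real.log ((2:ℝ)^(66:ℕ)) :=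
      Real.log_le_log (by positivity) hpow
    rw [Real.log_pow, Real.log_pow] at h1
    push_cast at h1
    linarith
  have hts : t ≤ 3.71846425 + (2/17) * s := by
    have hls : Real.log s = t / 2 := Real.log_sqrt hx0.le
    have hdiv : Real.log (s / 17) ≤ s / 17 - 1 := Real.log_le_sub_one_of_pos (by positivity)
    rw [Real.log_div (ne_of_gt hs0) (by norm_num)] at hdiv
    have : Real.log s ≤ Real.log 17 + s/17 - 1 := by linarith
    rw [hls] at this
    nlinarith
  have hs_up : s ≤ x/34 + 17/2 := by nlinarith [sq_nonneg (s - 17)]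
  -- core linear bound : 1.2614 * x ≤ 4 * L
  have hst : (1+s)*t ≤ (1+s)*(3.71846425 + (2/17)*s) :=
    mul_le_mul_of_nonneg_left hts (by positivity)
  have hcore : 1.2614 * x ≤ 4 * ((x-1) * Real.log 2 - (1 + s) * t) := by nlinarith
  calc x * (t + Real.log 2)^2 ≤ x * (1.2614 * t^2) := by
        apply mul_le_mul_of_nonneg_left h1 hx0.le
    _ = (1.2614 * x) * t^2 := by ring
    _ ≤ (4 * ((x-1) * Real.log 2 - (1 + s) * t)) * t^2 := by
        apply mul_le_mul_of_nonneg_right hcore (sq_nonneg t)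
    _ = 4 * ((x-1) * Real.log 2 - (1 + s) * t) * t^2 := by ring
lemma large_case {n : ℕ} (hn : 1 ≤ n) (hp283 : 283 ≤ p n) :
    Real.sqrt (θ (n+1)) - Real.sqrt (θ n) < Real.log (p n) / Real.sqrt (p n) := by
  apply main_of_key hn
  apply key_of_sq hn
  set P := p n with hP
  have hPodd : P % 2 = 1 := by
    rcases (@p_prime n).eq_two_or_odd with h | h
    · omega
    · exact h
  set m := P / 2 with hm
  have h2m : 2 * m = P - 1 := by omega
  have hm4 : 4 ≤ m := by omega
  -- nat chain
  have hnat : 4^m < m * ((2*m) ^ Nat.sqrt (2*m) * primorial (2*m)) := by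
    calc 4^m < m * Nat.centralBinom m := Nat.four_pow_lt_mul_centralBinom m (by omega)
      _ ≤ m * ((2*m) ^ Nat.sqrt (2*m) * primorial (2*m)) :=
          Nat.mul_le_mul_left m (centralBinom_le m (by omega))
  -- log version
  have hcast : ((4:ℕ):ℝ)^m < (m:ℝ) * (((2*m:ℕ):ℝ) ^ Nat.sqrt (2*m) * (primorial (2*m) : ℝ)) := by
    push_cast
    exact_mod_cast hnat
  have hlog : (m:ℝ) * Real.log 4
      < Real.log m + (Nat.sqrt (2*m) : ℝ) * Real.log ((2*m:ℕ):ℝ) + Real.log (primorial (2*m)) := by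
    have h0 : (0:ℝ) < ((4:ℕ):ℝ)^m := by positivity
    have hlt := Real.log_lt_log h0 hcast
    rw [Real.log_pow] at hlt
    have hm0 : ((m:ℕ):ℝ) ≠ 0 := by positivity
    have h2m0 : ((2*m:ℕ):ℝ) ≠ 0 := by positivity
    have hprim0 : ((primorial (2*m) : ℕ):ℝ) ≠ 0 := by
      have h := primorial_pos (2*m)
      have : (0:ℝ) < (primorial (2*m) : ℝ) := by exact_mod_cast h
      exact ne_of_gt this
    rw [Real.log_mul hm0 (by positivity), Real.log_mul (by positivity) hprim0, Real.log_pow] at hlt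
    push_cast at hlt ⊢
    linarith
  have hθ : Real.log (primorial (2*m)) ≤ θ n := log_primorial_le_theta hn (by omega)
  set x := (P:ℝ) with hx
  have hx283 : (283:ℝ) ≤ x := by rw [hx]; exact_mod_cast hp283
  have hx0 : (0:ℝ) < x := by linarith
  have hmx : (m:ℝ) = (x-1)/2 := by
    have : ((2*m:ℕ):ℝ) = ((P - 1 : ℕ):ℝ) := by rw [h2m]
    push_cast [Nat.cast_sub (by omega : 1 ≤ P)] at this
    linarith
  have h2mx : ((2*m:ℕ):ℝ) = x - 1 := by push_cast; rw [hmx]; ring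
  have hlog4 : Real.log (4:ℝ) = 2 * Real.log 2 := by
    rw [show (4:ℝ) = 2^2 by norm_num, Real.log_pow]; push_cast; ring
  have hlogm : Real.log (m:ℝ) ≤ Real.log x := by
    apply Real.log_le_log (by positivity)
    rw [hmx]; linarith
  have hsqrt : (Nat.sqrt (2*m) : ℝ) ≤ Real.sqrt x := by
    calc (Nat.sqrt (2*m) : ℝ) ≤ Real.sqrt ((2*m:ℕ):ℝ) := Real.nat_sqrt_le_real_sqrt
      _ ≤ Real.sqrt x := Real.sqrt_le_sqrt (by rw [h2mx]; linarith)
  have hlog2m_nonneg : 0 ≤ Real.log ((2*m:ℕ):ℝ) := Real.log_nonneg (by rw [h2mx]; linarith)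
  have hlog2m : Real.log ((2*m:ℕ):ℝ) ≤ Real.log x :=
    Real.log_le_log (by rw [h2mx]; linarith) (by rw [h2mx]; linarith)
  have hsqlog : (Nat.sqrt (2*m) : ℝ) * Real.log ((2*m:ℕ):ℝ) ≤ Real.sqrt x * Real.log x := by
    apply mul_le_mul hsqrt hlog2m hlog2m_nonneg (Real.sqrt_nonneg x)
  have hlogx_pos : (0:ℝ) < Real.log x := Real.log_pos (by linarith)
  have hLθ : (x-1) * Real.log 2 - (1 + Real.sqrt x) * Real.log x ≤ θ n := by
    have e1 : (m:ℝ) * Real.log 4 = (x-1) * Real.log 2 := by rw [hlog4, hmx]; ring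
    nlinarith [hlog, hθ, hlogm, hsqlog]
  have hA := lemA hx283
  have hlog2x : Real.log (2 * x) = Real.log x + Real.log 2 := by
    rw [Real.log_mul (by norm_num) (ne_of_gt hx0)]; ring
  calc x * (Real.log (2 * x))^2 = x * (Real.log x + Real.log 2)^2 := by rw [hlog2x]
    _ ≤ 4 * ((x-1) * Real.log 2 - (1 + Real.sqrt x) * Real.log x) * (Real.log x)^2 := hA
    _ ≤ 4 * θ n * (Real.log x)^2 := by nlinarith [sq_nonneg (Real.log x)]
lemma log_le_of_pow {P c k : ℕ} (hP : 1 ≤ P) (h : P^k ≤ 2^c) :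
    (k:ℝ) * Real.log P ≤ (c:ℝ) * Real.log 2 := by
  have h1 : Real.log ((P:ℝ)^k) ≤ Real.log ((2:ℝ)^c) := by
    apply Real.log_le_log (by positivity)
    exact_mod_cast h
  rwa [Real.log_pow, Real.log_pow] at h1

lemma log_ge_of_pow {P c k : ℕ} (h : 2^c ≤ P^k) :
    (c:ℝ) * Real.log 2 ≤ (k:ℝ) * Real.log P := by
  have h1 : Real.log ((2:ℝ)^c) ≤ Real.log ((P:ℝ)^k) := by
    apply Real.log_le_log (by positivity)
    exact_mod_cast h
  rwa [Real.log_pow, Real.log_pow] at h1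

lemma case_small (n N P a b c : ℕ) (hn : 1 ≤ n)
    (hθ : θ n = Real.log (N:ℝ)) (hp : p n = P) (hP2 : 2 ≤ P) (ha : 1 ≤ a)
    (h2 : 2^a ≤ N) (h3 : 2^b ≤ P^16) (h4 : (2*P)^16 ≤ 2^c)
    (hnum : (P:ℝ) * ((c:ℝ) * 0.6931471808 / 16)^2
        ≤ 4 * ((a:ℝ) * 0.6931471803) * ((b:ℝ) * 0.6931471803 / 16)^2) :
    Real.sqrt (θ (n+1)) - Real.sqrt (θ n) < Real.log (p n) / Real.sqrt (p n) := by
  apply main_of_key hn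
  apply key_of_sq hn
  have hl2lo : 0.6931471803 < Real.log 2 := Real.log_two_gt_d9
  have hl2hi : Real.log 2 < 0.6931471808 := Real.log_two_lt_d9
  rw [hθ, hp]
  have hN1 : (1:ℕ) ≤ N := le_trans (Nat.one_le_two_pow) h2
  -- log N lower bound
  have e2 : (a:ℝ) * 0.6931471803 ≤ Real.log (N:ℝ) := by
    have h := log_ge_of_pow (P := N) (c := a) (k := 1) (by simpa using h2)
    have ha' : (0:ℝ) ≤ (a:ℝ) := by positivity
    have step : (a:ℝ)*0.6931471803 ≤ (a:ℝ)*Real.log 2 := mul_le_mul_of_nonneg_left hl2lo.le ha'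
    norm_num at h
    linarith
  -- log P lower bound
  have e3 : (b:ℝ) * 0.6931471803 / 16 ≤ Real.log (P:ℝ) := by
    have h := log_ge_of_pow (P := P) (c := b) (k := 16) h3
    have hb' : (0:ℝ) ≤ (b:ℝ) := by positivity
    have step : (b:ℝ)*0.6931471803 ≤ (b:ℝ)*Real.log 2 := mul_le_mul_of_nonneg_left hl2lo.le hb'
    norm_num at h
    linarith
  -- log (2P) upper bound
  have e1 : Real.log (2 * (P:ℝ)) ≤ (c:ℝ) * 0.6931471808 / 16 := by
    have h2P : (1:ℕ) ≤ 2 * P := by omega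
    have h := log_le_of_pow (P := 2*P) (c := c) (k := 16) h2P h4
    have hcast : ((2*P : ℕ):ℝ) = 2 * (P:ℝ) := by push_cast; ring
    rw [hcast] at h
    have hc' : (0:ℝ) ≤ (c:ℝ) := by positivity
    have step : (c:ℝ)*Real.log 2 ≤ (c:ℝ)*0.6931471808 := mul_le_mul_of_nonneg_left hl2hi.le hc'
    norm_num at h
    linarith
  have hlog2P_nonneg : (0:ℝ) ≤ Real.log (2 * (P:ℝ)) := by
    apply Real.log_nonneg
    have : (2:ℝ) ≤ (P:ℝ) := by exact_mod_cast hP2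
    linarith
  have hlogP_nonneg : (0:ℝ) ≤ Real.log (P:ℝ) := by
    apply Real.log_nonneg
    have : (2:ℝ) ≤ (P:ℝ) := by exact_mod_cast hP2
    linarith
  have hb0 : (0:ℝ) ≤ (b:ℝ) * 0.6931471803 / 16 := by positivity
  have ha0 : (0:ℝ) ≤ (a:ℝ) * 0.6931471803 := by positivity
  have hP0 : (0:ℝ) ≤ (P:ℝ) := by positivity
  calc (P:ℝ) * (Real.log (2 * (P:ℝ)))^2
      ≤ (P:ℝ) * ((c:ℝ) * 0.6931471808 / 16)^2 := by
        apply mul_le_mul_of_nonneg_left _ hP0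
        exact pow_le_pow_left₀ hlog2P_nonneg e1 2
    _ ≤ 4 * ((a:ℝ) * 0.6931471803) * ((b:ℝ) * 0.6931471803 / 16)^2 := hnum
    _ ≤ 4 * Real.log (N:ℝ) * (Real.log (P:ℝ))^2 := by
        apply mul_le_mul
        · linarith
        · exact pow_le_pow_left₀ hb0 e3 2
        · positivity
        · positivity
lemma hnth0 : Nat.nth Nat.Prime 0 = 2 := Nat.nth_prime_zero_eq_two

lemma hnth1 : Nat.nth Nat.Prime 1 = 3 := nth_succ_eq hnth0 (by norm_num) (by norm_num) (by decide)

lemma hnth2 : Nat.nth Nat.Prime 2 = 5 := nth_succ_eq hnth1 (by norm_num) (by norm_num) (by decide)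

lemma hnth3 : Nat.nth Nat.Prime 3 = 7 := nth_succ_eq hnth2 (by norm_num) (by norm_num) (by decide)

lemma hnth4 : Nat.nth Nat.Prime 4 = 11 := nth_succ_eq hnth3 (by norm_num) (by norm_num) (by decide)

lemma hnth5 : Nat.nth Nat.Prime 5 = 13 := nth_succ_eq hnth4 (by norm_num) (by norm_num) (by decide)

lemma hnth6 : Nat.nth Nat.Prime 6 = 17 := nth_succ_eq hnth5 (by norm_num) (by norm_num) (by decide)

lemma hnth7 : Nat.nth Nat.Prime 7 = 19 := nth_succ_eq hnth6 (by norm_num) (by norm_num) (by decide)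

lemma hnth8 : Nat.nth Nat.Prime 8 = 23 := nth_succ_eq hnth7 (by norm_num) (by norm_num) (by decide)

lemma hnth9 : Nat.nth Nat.Prime 9 = 29 := nth_succ_eq hnth8 (by norm_num) (by norm_num) (by decide)

lemma hnth10 : Nat.nth Nat.Prime 10 = 31 := nth_succ_eq hnth9 (by norm_num) (by norm_num) (by decide)

lemma hnth11 : Nat.nth Nat.Prime 11 = 37 := nth_succ_eq hnth10 (by norm_num) (by norm_num) (by decide)

lemma hnth12 : Nat.nth Nat.Prime 12 = 41 := nth_succ_eq hnth11 (by norm_num) (by norm_num) (by decide)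

lemma hnth13 : Nat.nth Nat.Prime 13 = 43 := nth_succ_eq hnth12 (by norm_num) (by norm_num) (by decide)

lemma hnth14 : Nat.nth Nat.Prime 14 = 47 := nth_succ_eq hnth13 (by norm_num) (by norm_num) (by decide)

lemma hnth15 : Nat.nth Nat.Prime 15 = 53 := nth_succ_eq hnth14 (by norm_num) (by norm_num) (by decide)

lemma hnth16 : Nat.nth Nat.Prime 16 = 59 := nth_succ_eq hnth15 (by norm_num) (by norm_num) (by decide)

lemma hnth17 : Nat.nth Nat.Prime 17 = 61 := nth_succ_eq hnth16 (by norm_num) (by norm_num) (by decide)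

lemma hnth18 : Nat.nth Nat.Prime 18 = 67 := nth_succ_eq hnth17 (by norm_num) (by norm_num) (by decide)

lemma hnth19 : Nat.nth Nat.Prime 19 = 71 := nth_succ_eq hnth18 (by norm_num) (by norm_num) (by decide)

lemma hnth20 : Nat.nth Nat.Prime 20 = 73 := nth_succ_eq hnth19 (by norm_num) (by norm_num) (by decide)

lemma hnth21 : Nat.nth Nat.Prime 21 = 79 := nth_succ_eq hnth20 (by norm_num) (by norm_num) (by decide)

lemma hnth22 : Nat.nth Nat.Prime 22 = 83 := nth_succ_eq hnth21 (by norm_num) (by norm_num) (by decide)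

lemma hnth23 : Nat.nth Nat.Prime 23 = 89 := nth_succ_eq hnth22 (by norm_num) (by norm_num) (by decide)

lemma hnth24 : Nat.nth Nat.Prime 24 = 97 := nth_succ_eq hnth23 (by norm_num) (by norm_num) (by decide)

lemma hnth25 : Nat.nth Nat.Prime 25 = 101 := nth_succ_eq hnth24 (by norm_num) (by norm_num) (by decide)

lemma hnth26 : Nat.nth Nat.Prime 26 = 103 := nth_succ_eq hnth25 (by norm_num) (by norm_num) (by decide)

lemma hnth27 : Nat.nth Nat.Prime 27 = 107 := nth_succ_eq hnth26 (by norm_num) (by norm_num) (by decide)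

lemma hnth28 : Nat.nth Nat.Prime 28 = 109 := nth_succ_eq hnth27 (by norm_num) (by norm_num) (by decide)

lemma hnth29 : Nat.nth Nat.Prime 29 = 113 := nth_succ_eq hnth28 (by norm_num) (by norm_num) (by decide)

lemma hnth30 : Nat.nth Nat.Prime 30 = 127 := nth_succ_eq hnth29 (by norm_num) (by norm_num) (by decide)

lemma hnth31 : Nat.nth Nat.Prime 31 = 131 := nth_succ_eq hnth30 (by norm_num) (by norm_num) (by decide)

lemma hnth32 : Nat.nth Nat.Prime 32 = 137 := nth_succ_eq hnth31 (by norm_num) (by norm_num) (by decide)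

lemma hnth33 : Nat.nth Nat.Prime 33 = 139 := nth_succ_eq hnth32 (by norm_num) (by norm_num) (by decide)

lemma hnth34 : Nat.nth Nat.Prime 34 = 149 := nth_succ_eq hnth33 (by norm_num) (by norm_num) (by set_option maxRecDepth 100000 in decide)

lemma hnth35 : Nat.nth Nat.Prime 35 = 151 := nth_succ_eq hnth34 (by norm_num) (by norm_num) (by set_option maxRecDepth 100000 in decide)

lemma hnth36 : Nat.nth Nat.Prime 36 = 157 := nth_succ_eq hnth35 (by norm_num) (by norm_num) (by set_option maxRecDepth 100000 in decide)

lemma hnth37 : Nat.nth Nat.Prime 37 = 163 := nth_succ_eq hnth36 (by norm_num) (by norm_num) (by set_option maxRecDepth 100000 in decide)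

lemma hnth38 : Nat.nth Nat.Prime 38 = 167 := nth_succ_eq hnth37 (by norm_num) (by norm_num) (by set_option maxRecDepth 100000 in decide)

lemma hnth39 : Nat.nth Nat.Prime 39 = 173 := nth_succ_eq hnth38 (by norm_num) (by norm_num) (by set_option maxRecDepth 100000 in decide)

lemma hnth40 : Nat.nth Nat.Prime 40 = 179 := nth_succ_eq hnth39 (by norm_num) (by norm_num) (by set_option maxRecDepth 100000 in decide)

lemma hnth41 : Nat.nth Nat.Prime 41 = 181 := nth_succ_eq hnth40 (by norm_num) (by norm_num) (by set_option maxRecDepth 100000 in decide)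

lemma hnth42 : Nat.nth Nat.Prime 42 = 191 := nth_succ_eq hnth41 (by norm_num) (by norm_num) (by set_option maxRecDepth 100000 in decide)

lemma hnth43 : Nat.nth Nat.Prime 43 = 193 := nth_succ_eq hnth42 (by norm_num) (by norm_num) (by set_option maxRecDepth 100000 in decide)

lemma hnth44 : Nat.nth Nat.Prime 44 = 197 := nth_succ_eq hnth43 (by norm_num) (by norm_num) (by set_option maxRecDepth 100000 in decide)

lemma hnth45 : Nat.nth Nat.Prime 45 = 199 := nth_succ_eq hnth44 (by norm_num) (by norm_num) (by set_option maxRecDepth 100000 in decide)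

lemma hnth46 : Nat.nth Nat.Prime 46 = 211 := nth_succ_eq hnth45 (by norm_num) (by norm_num) (by set_option maxRecDepth 100000 in decide)

lemma hnth47 : Nat.nth Nat.Prime 47 = 223 := nth_succ_eq hnth46 (by norm_num) (by norm_num) (by set_option maxRecDepth 100000 in decide)

lemma hnth48 : Nat.nth Nat.Prime 48 = 227 := nth_succ_eq hnth47 (by norm_num) (by norm_num) (by set_option maxRecDepth 100000 in decide)

lemma hnth49 : Nat.nth Nat.Prime 49 = 229 := nth_succ_eq hnth48 (by norm_num) (by norm_num) (by set_option maxRecDepth 100000 in decide)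

lemma hnth50 : Nat.nth Nat.Prime 50 = 233 := nth_succ_eq hnth49 (by norm_num) (by norm_num) (by set_option maxRecDepth 100000 in decide)

lemma hnth51 : Nat.nth Nat.Prime 51 = 239 := nth_succ_eq hnth50 (by norm_num) (by norm_num) (by set_option maxRecDepth 100000 in decide)

lemma hnth52 : Nat.nth Nat.Prime 52 = 241 := nth_succ_eq hnth51 (by norm_num) (by norm_num) (by set_option maxRecDepth 100000 in decide)

lemma hnth53 : Nat.nth Nat.Prime 53 = 251 := nth_succ_eq hnth52 (by norm_num) (by norm_num) (by set_option maxRecDepth 100000 in decide)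

lemma hnth54 : Nat.nth Nat.Prime 54 = 257 := nth_succ_eq hnth53 (by norm_num) (by norm_num) (by set_option maxRecDepth 100000 in decide)

lemma hnth55 : Nat.nth Nat.Prime 55 = 263 := nth_succ_eq hnth54 (by norm_num) (by norm_num) (by set_option maxRecDepth 100000 in decide)

lemma hnth56 : Nat.nth Nat.Prime 56 = 269 := nth_succ_eq hnth55 (by norm_num) (by norm_num) (by set_option maxRecDepth 100000 in decide)

lemma hnth57 : Nat.nth Nat.Prime 57 = 271 := nth_succ_eq hnth56 (by norm_num) (by norm_num) (by set_option maxRecDepth 100000 in decide)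

lemma hnth58 : Nat.nth Nat.Prime 58 = 277 := nth_succ_eq hnth57 (by norm_num) (by norm_num) (by set_option maxRecDepth 100000 in decide)

lemma hnth59 : Nat.nth Nat.Prime 59 = 281 := nth_succ_eq hnth58 (by norm_num) (by norm_num) (by set_option maxRecDepth 100000 in decide)

lemma hnth60 : Nat.nth Nat.Prime 60 = 283 := nth_succ_eq hnth59 (by norm_num) (by norm_num) (by set_option maxRecDepth 100000 in decide)

lemma hpp1 : p 1 = 2 := by simp only [p]; norm_num [hnth0]

lemma hpp2 : p 2 = 3 := by simp only [p]; norm_num [hnth1]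

lemma hpp3 : p 3 = 5 := by simp only [p]; norm_num [hnth2]

lemma hpp4 : p 4 = 7 := by simp only [p]; norm_num [hnth3]

lemma hpp5 : p 5 = 11 := by simp only [p]; norm_num [hnth4]

lemma hpp6 : p 6 = 13 := by simp only [p]; norm_num [hnth5]

lemma hpp7 : p 7 = 17 := by simp only [p]; norm_num [hnth6]

lemma hpp8 : p 8 = 19 := by simp only [p]; norm_num [hnth7]

lemma hpp9 : p 9 = 23 := by simp only [p]; norm_num [hnth8]

lemma hpp10 : p 10 = 29 := by simp only [p]; norm_num [hnth9]

lemma hpp11 : p 11 = 31 := by simp only [p]; norm_num [hnth10]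

lemma hpp12 : p 12 = 37 := by simp only [p]; norm_num [hnth11]

lemma hpp13 : p 13 = 41 := by simp only [p]; norm_num [hnth12]

lemma hpp14 : p 14 = 43 := by simp only [p]; norm_num [hnth13]

lemma hpp15 : p 15 = 47 := by simp only [p]; norm_num [hnth14]

lemma hpp16 : p 16 = 53 := by simp only [p]; norm_num [hnth15]

lemma hpp17 : p 17 = 59 := by simp only [p]; norm_num [hnth16]

lemma hpp18 : p 18 = 61 := by simp only [p]; norm_num [hnth17]

lemma hpp19 : p 19 = 67 := by simp only [p]; norm_num [hnth18]

lemma hpp20 : p 20 = 71 := by simp only [p]; norm_num [hnth19]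

lemma hpp21 : p 21 = 73 := by simp only [p]; norm_num [hnth20]

lemma hpp22 : p 22 = 79 := by simp only [p]; norm_num [hnth21]

lemma hpp23 : p 23 = 83 := by simp only [p]; norm_num [hnth22]

lemma hpp24 : p 24 = 89 := by simp only [p]; norm_num [hnth23]

lemma hpp25 : p 25 = 97 := by simp only [p]; norm_num [hnth24]

lemma hpp26 : p 26 = 101 := by simp only [p]; norm_num [hnth25]

lemma hpp27 : p 27 = 103 := by simp only [p]; norm_num [hnth26]

lemma hpp28 : p 28 = 107 := by simp only [p]; norm_num [hnth27]

lemma hpp29 : p 29 = 109 := by simp only [p]; norm_num [hnth28]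

lemma hpp30 : p 30 = 113 := by simp only [p]; norm_num [hnth29]

lemma hpp31 : p 31 = 127 := by simp only [p]; norm_num [hnth30]

lemma hpp32 : p 32 = 131 := by simp only [p]; norm_num [hnth31]

lemma hpp33 : p 33 = 137 := by simp only [p]; norm_num [hnth32]

lemma hpp34 : p 34 = 139 := by simp only [p]; norm_num [hnth33]

lemma hpp35 : p 35 = 149 := by simp only [p]; norm_num [hnth34]

lemma hpp36 : p 36 = 151 := by simp only [p]; norm_num [hnth35]

lemma hpp37 : p 37 = 157 := by simp only [p]; norm_num [hnth36]

lemma hpp38 : p 38 = 163 := by simp only [p]; norm_num [hnth37]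

lemma hpp39 : p 39 = 167 := by simp only [p]; norm_num [hnth38]

lemma hpp40 : p 40 = 173 := by simp only [p]; norm_num [hnth39]

lemma hpp41 : p 41 = 179 := by simp only [p]; norm_num [hnth40]

lemma hpp42 : p 42 = 181 := by simp only [p]; norm_num [hnth41]

lemma hpp43 : p 43 = 191 := by simp only [p]; norm_num [hnth42]

lemma hpp44 : p 44 = 193 := by simp only [p]; norm_num [hnth43]

lemma hpp45 : p 45 = 197 := by simp only [p]; norm_num [hnth44]

lemma hpp46 : p 46 = 199 := by simp only [p]; norm_num [hnth45]

lemma hpp47 : p 47 = 211 := by simp only [p]; norm_num [hnth46]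

lemma hpp48 : p 48 = 223 := by simp only [p]; norm_num [hnth47]

lemma hpp49 : p 49 = 227 := by simp only [p]; norm_num [hnth48]

lemma hpp50 : p 50 = 229 := by simp only [p]; norm_num [hnth49]

lemma hpp51 : p 51 = 233 := by simp only [p]; norm_num [hnth50]

lemma hpp52 : p 52 = 239 := by simp only [p]; norm_num [hnth51]

lemma hpp53 : p 53 = 241 := by simp only [p]; norm_num [hnth52]

lemma hpp54 : p 54 = 251 := by simp only [p]; norm_num [hnth53]

lemma hpp55 : p 55 = 257 := by simp only [p]; norm_num [hnth54]

lemma hpp56 : p 56 = 263 := by simp only [p]; norm_num [hnth55]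

lemma hpp57 : p 57 = 269 := by simp only [p]; norm_num [hnth56]

lemma hpp58 : p 58 = 271 := by simp only [p]; norm_num [hnth57]

lemma hpp59 : p 59 = 277 := by simp only [p]; norm_num [hnth58]

lemma hpp60 : p 60 = 281 := by simp only [p]; norm_num [hnth59]

lemma hpp61 : p 61 = 283 := by simp only [p]; norm_num [hnth60]

lemma th1 : θ 1 = Real.log (2:ℝ) := by
  have h : θ 1 = θ 0 + Real.log (p 1) := theta_succ 0
  have h0 : θ 0 = 0 := by simp [θ]
  rw [h, h0, hpp1]; norm_num

lemma th2 : θ 2 = Real.log (6:ℝ) := by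
  rw [show (2:ℕ) = 1+1 from rfl, theta_succ 1, th1, hpp2]
  rw [show (((3:ℕ)):ℝ) = (3:ℝ) by norm_num]
  rw [← Real.log_mul (by norm_num) (by norm_num)]
  norm_num

lemma th3 : θ 3 = Real.log (30:ℝ) := by
  rw [show (3:ℕ) = 2+1 from rfl, theta_succ 2, th2, hpp3]
  rw [show (((5:ℕ)):ℝ) = (5:ℝ) by norm_num]
  rw [← Real.log_mul (by norm_num) (by norm_num)]
  norm_num

lemma th4 : θ 4 = Real.log (210:ℝ) := by
  rw [show (4:ℕ) = 3+1 from rfl, theta_succ 3, th3, hpp4]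
  rw [show (((7:ℕ)):ℝ) = (7:ℝ) by norm_num]
  rw [← Real.log_mul (by norm_num) (by norm_num)]
  norm_num

lemma th5 : θ 5 = Real.log (2310:ℝ) := by
  rw [show (5:ℕ) = 4+1 from rfl, theta_succ 4, th4, hpp5]
  rw [show (((11:ℕ)):ℝ) = (11:ℝ) by norm_num]
  rw [← Real.log_mul (by norm_num) (by norm_num)]
  norm_num

lemma th6 : θ 6 = Real.log (30030:ℝ) := by
  rw [show (6:ℕ) = 5+1 from rfl, theta_succ 5, th5, hpp6]
  rw [show (((13:ℕ)):ℝ) = (13:ℝ) by norm_num]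
  rw [← Real.log_mul (by norm_num) (by norm_num)]
  norm_num

lemma th7 : θ 7 = Real.log (510510:ℝ) := by
  rw [show (7:ℕ) = 6+1 from rfl, theta_succ 6, th6, hpp7]
  rw [show (((17:ℕ)):ℝ) = (17:ℝ) by norm_num]
  rw [← Real.log_mul (by norm_num) (by norm_num)]
  norm_num

lemma th8 : θ 8 = Real.log (9699690:ℝ) := by
  rw [show (8:ℕ) = 7+1 from rfl, theta_succ 7, th7, hpp8]
  rw [show (((19:ℕ)):ℝ) = (19:ℝ) by norm_num]
  rw [← Real.log_mul (by norm_num) (by norm_num)]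
  norm_num

lemma th9 : θ 9 = Real.log (223092870:ℝ) := by
  rw [show (9:ℕ) = 8+1 from rfl, theta_succ 8, th8, hpp9]
  rw [show (((23:ℕ)):ℝ) = (23:ℝ) by norm_num]
  rw [← Real.log_mul (by norm_num) (by norm_num)]
  norm_num

lemma th10 : θ 10 = Real.log (6469693230:ℝ) := by
  rw [show (10:ℕ) = 9+1 from rfl, theta_succ 9, th9, hpp10]
  rw [show (((29:ℕ)):ℝ) = (29:ℝ) by norm_num]
  rw [← Real.log_mul (by norm_num) (by norm_num)]
  norm_num

lemma th11 : θ 11 = Real.log (200560490130:ℝ) := by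
  rw [show (11:ℕ) = 10+1 from rfl, theta_succ 10, th10, hpp11]
  rw [show (((31:ℕ)):ℝ) = (31:ℝ) by norm_num]
  rw [← Real.log_mul (by norm_num) (by norm_num)]
  norm_num

lemma th12 : θ 12 = Real.log (7420738134810:ℝ) := by
  rw [show (12:ℕ) = 11+1 from rfl, theta_succ 11, th11, hpp12]
  rw [show (((37:ℕ)):ℝ) = (37:ℝ) by norm_num]
  rw [← Real.log_mul (by norm_num) (by norm_num)]
  norm_num

lemma th13 : θ 13 = Real.log (304250263527210:ℝ) := by
  rw [show (13:ℕ) = 12+1 from rfl, theta_succ 12, th12, hpp13]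
  rw [show (((41:ℕ)):ℝ) = (41:ℝ) by norm_num]
  rw [← Real.log_mul (by norm_num) (by norm_num)]
  norm_num

lemma th14 : θ 14 = Real.log (13082761331670030:ℝ) := by
  rw [show (14:ℕ) = 13+1 from rfl, theta_succ 13, th13, hpp14]
  rw [show (((43:ℕ)):ℝ) = (43:ℝ) by norm_num]
  rw [← Real.log_mul (by norm_num) (by norm_num)]
  norm_num

lemma th15 : θ 15 = Real.log (614889782588491410:ℝ) := by
  rw [show (15:ℕ) = 14+1 from rfl, theta_succ 14, th14, hpp15]
  rw [show (((47:ℕ)):ℝ) = (47:ℝ) by norm_num]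
  rw [← Real.log_mul (by norm_num) (by norm_num)]
  norm_num

lemma th16 : θ 16 = Real.log (32589158477190044730:ℝ) := by
  rw [show (16:ℕ) = 15+1 from rfl, theta_succ 15, th15, hpp16]
  rw [show (((53:ℕ)):ℝ) = (53:ℝ) by norm_num]
  rw [← Real.log_mul (by norm_num) (by norm_num)]
  norm_num

lemma th17 : θ 17 = Real.log (1922760350154212639070:ℝ) := by
  rw [show (17:ℕ) = 16+1 from rfl, theta_succ 16, th16, hpp17]
  rw [show (((59:ℕ)):ℝ) = (59:ℝ) by norm_num]
  rw [← Real.log_mul (by norm_num) (by norm_num)]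
  norm_num

lemma th18 : θ 18 = Real.log (117288381359406970983270:ℝ) := by
  rw [show (18:ℕ) = 17+1 from rfl, theta_succ 17, th17, hpp18]
  rw [show (((61:ℕ)):ℝ) = (61:ℝ) by norm_num]
  rw [← Real.log_mul (by norm_num) (by norm_num)]
  norm_num

lemma th19 : θ 19 = Real.log (7858321551080267055879090:ℝ) := by
  rw [show (19:ℕ) = 18+1 from rfl, theta_succ 18, th18, hpp19]
  rw [show (((67:ℕ)):ℝ) = (67:ℝ) by norm_num]
  rw [← Real.log_mul (by norm_num) (by norm_num)]
  norm_num

lemma th20 : θ 20 = Real.log (557940830126698960967415390:ℝ) := by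
  rw [show (20:ℕ) = 19+1 from rfl, theta_succ 19, th19, hpp20]
  rw [show (((71:ℕ)):ℝ) = (71:ℝ) by norm_num]
  rw [← Real.log_mul (by norm_num) (by norm_num)]
  norm_num

lemma th21 : θ 21 = Real.log (40729680599249024150621323470:ℝ) := by
  rw [show (21:ℕ) = 20+1 from rfl, theta_succ 20, th20, hpp21]
  rw [show (((73:ℕ)):ℝ) = (73:ℝ) by norm_num]
  rw [← Real.log_mul (by norm_num) (by norm_num)]
  norm_num

lemma th22 : θ 22 = Real.log (3217644767340672907899084554130:ℝ) := by
  rw [show (22:ℕ) = 21+1 from rfl, theta_succ 21, th21, hpp22]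
  rw [show (((79:ℕ)):ℝ) = (79:ℝ) by norm_num]
  rw [← Real.log_mul (by norm_num) (by norm_num)]
  norm_num

lemma th23 : θ 23 = Real.log (267064515689275851355624017992790:ℝ) := by
  rw [show (23:ℕ) = 22+1 from rfl, theta_succ 22, th22, hpp23]
  rw [show (((83:ℕ)):ℝ) = (83:ℝ) by norm_num]
  rw [← Real.log_mul (by norm_num) (by norm_num)]
  norm_num

lemma th24 : θ 24 = Real.log (23768741896345550770650537601358310:ℝ) := by
  rw [show (24:ℕ) = 23+1 from rfl, theta_succ 23, th23, hpp24]
  rw [show (((89:ℕ)):ℝ) = (89:ℝ) by norm_num]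
  rw [← Real.log_mul (by norm_num) (by norm_num)]
  norm_num

lemma th25 : θ 25 = Real.log (2305567963945518424753102147331756070:ℝ) := by
  rw [show (25:ℕ) = 24+1 from rfl, theta_succ 24, th24, hpp25]
  rw [show (((97:ℕ)):ℝ) = (97:ℝ) by norm_num]
  rw [← Real.log_mul (by norm_num) (by norm_num)]
  norm_num

lemma th26 : θ 26 = Real.log (232862364358497360900063316880507363070:ℝ) := by
  rw [show (26:ℕ) = 25+1 from rfl, theta_succ 25, th25, hpp26]
  rw [show (((101:ℕ)):ℝ) = (101:ℝ) by norm_num]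
  rw [← Real.log_mul (by norm_num) (by norm_num)]
  norm_num

lemma th27 : θ 27 = Real.log (23984823528925228172706521638692258396210:ℝ) := by
  rw [show (27:ℕ) = 26+1 from rfl, theta_succ 26, th26, hpp27]
  rw [show (((103:ℕ)):ℝ) = (103:ℝ) by norm_num]
  rw [← Real.log_mul (by norm_num) (by norm_num)]
  norm_num

lemma th28 : θ 28 = Real.log (2566376117594999414479597815340071648394470:ℝ) := by
  rw [show (28:ℕ) = 27+1 from rfl, theta_succ 27, th27, hpp28]
  rw [show (((107:ℕ)):ℝ) = (107:ℝ) by norm_num]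
  rw [← Real.log_mul (by norm_num) (by norm_num)]
  norm_num

lemma th29 : θ 29 = Real.log (279734996817854936178276161872067809674997230:ℝ) := by
  rw [show (29:ℕ) = 28+1 from rfl, theta_succ 28, th28, hpp29]
  rw [show (((109:ℕ)):ℝ) = (109:ℝ) by norm_num]
  rw [← Real.log_mul (by norm_num) (by norm_num)]
  norm_num

lemma th30 : θ 30 = Real.log (31610054640417607788145206291543662493274686990:ℝ) := by
  rw [show (30:ℕ) = 29+1 from rfl, theta_succ 29, th29, hpp30]
  rw [show (((113:ℕ)):ℝ) = (113:ℝ) by norm_num]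
  rw [← Real.log_mul (by norm_num) (by norm_num)]
  norm_num

lemma th31 : θ 31 = Real.log (4014476939333036189094441199026045136645885247730:ℝ) := by
  rw [show (31:ℕ) = 30+1 from rfl, theta_succ 30, th30, hpp31]
  rw [show (((127:ℕ)):ℝ) = (127:ℝ) by norm_num]
  rw [← Real.log_mul (by norm_num) (by norm_num)]
  norm_num

lemma th32 : θ 32 = Real.log (525896479052627740771371797072411912900610967452630:ℝ) := by
  rw [show (32:ℕ) = 31+1 from rfl, theta_succ 31, th31, hpp32]
  rw [show (((131:ℕ)):ℝ) = (131:ℝ) by norm_num]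
  rw [← Real.log_mul (by norm_num) (by norm_num)]
  norm_num

lemma th33 : θ 33 = Real.log (72047817630210000485677936198920432067383702541010310:ℝ) := by
  rw [show (33:ℕ) = 32+1 from rfl, theta_succ 32, th32, hpp33]
  rw [show (((137:ℕ)):ℝ) = (137:ℝ) by norm_num]
  rw [← Real.log_mul (by norm_num) (by norm_num)]
  norm_num

lemma th34 : θ 34 = Real.log (10014646650599190067509233131649940057366334653200433090:ℝ) := by
  rw [show (34:ℕ) = 33+1 from rfl, theta_succ 33, th33, hpp34]
  rw [show (((139:ℕ)):ℝ) = (139:ℝ) by norm_num]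
  rw [← Real.log_mul (by norm_num) (by norm_num)]
  norm_num

lemma th35 : θ 35 = Real.log (1492182350939279320058875736615841068547583863326864530410:ℝ) := by
  rw [show (35:ℕ) = 34+1 from rfl, theta_succ 34, th34, hpp35]
  rw [show (((149:ℕ)):ℝ) = (149:ℝ) by norm_num]
  rw [← Real.log_mul (by norm_num) (by norm_num)]
  norm_num

lemma th36 : θ 36 = Real.log (225319534991831177328890236228992001350685163362356544091910:ℝ) := by
  rw [show (36:ℕ) = 35+1 from rfl, theta_succ 35, th35, hpp36]
  rw [show (((151:ℕ)):ℝ) = (151:ℝ) by norm_num]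
  rw [← Real.log_mul (by norm_num) (by norm_num)]
  norm_num

lemma th37 : θ 37 = Real.log (35375166993717494840635767087951744212057570647889977422429870:ℝ) := by
  rw [show (37:ℕ) = 36+1 from rfl, theta_succ 36, th36, hpp37]
  rw [show (((157:ℕ)):ℝ) = (157:ℝ) by norm_num]
  rw [← Real.log_mul (by norm_num) (by norm_num)]
  norm_num

lemma th38 : θ 38 = Real.log (5766152219975951659023630035336134306565384015606066319856068810:ℝ) := by
  rw [show (38:ℕ) = 37+1 from rfl, theta_succ 37, th37, hpp38]
  rw [show (((163:ℕ)):ℝ) = (163:ℝ) by norm_num]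
  rw [← Real.log_mul (by norm_num) (by norm_num)]
  norm_num

lemma th39 : θ 39 = Real.log (962947420735983927056946215901134429196419130606213075415963491270:ℝ) := by
  rw [show (39:ℕ) = 38+1 from rfl, theta_succ 38, th38, hpp39]
  rw [show (((167:ℕ)):ℝ) = (167:ℝ) by norm_num]
  rw [← Real.log_mul (by norm_num) (by norm_num)]
  norm_num

lemma th40 : θ 40 = Real.log (166589903787325219380851695350896256250980509594874862046961683989710:ℝ) := by
  rw [show (40:ℕ) = 39+1 from rfl, theta_succ 39, th39, hpp40]
  rw [show (((173:ℕ)):ℝ) = (173:ℝ) by norm_num]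
  rw [← Real.log_mul (by norm_num) (by norm_num)]
  norm_num

lemma th41 : θ 41 = Real.log (29819592777931214269172453467810429868925511217482600306406141434158090:ℝ) := by
  rw [show (41:ℕ) = 40+1 from rfl, theta_succ 40, th40, hpp41]
  rw [show (((179:ℕ)):ℝ) = (179:ℝ) by norm_num]
  rw [← Real.log_mul (by norm_num) (by norm_num)]
  norm_num

lemma th42 : θ 42 = Real.log (5397346292805549782720214077673687806275517530364350655459511599582614290:ℝ) := by
  rw [show (42:ℕ) = 41+1 from rfl, theta_succ 41, th41, hpp42]
  rw [show (((181:ℕ)):ℝ) = (181:ℝ) by norm_num]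
  rw [← Real.log_mul (by norm_num) (by norm_num)]
  norm_num

lemma th43 : θ 43 = Real.log (1030893141925860008499560888835674370998623848299590975192766715520279329390:ℝ) := by
  rw [show (43:ℕ) = 42+1 from rfl, theta_succ 42, th42, hpp43]
  rw [show (((191:ℕ)):ℝ) = (191:ℝ) by norm_num]
  rw [← Real.log_mul (by norm_num) (by norm_num)]
  norm_num

lemma th44 : θ 44 = Real.log (198962376391690981640415251545285153602734402721821058212203976095413910572270:ℝ) := by
  rw [show (44:ℕ) = 43+1 from rfl, theta_succ 43, th43, hpp44]
  rw [show (((193:ℕ)):ℝ) = (193:ℝ) by norm_num]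
  rw [← Real.log_mul (by norm_num) (by norm_num)]
  norm_num

lemma th45 : θ 45 = Real.log (39195588149163123383161804554421175259738677336198748467804183290796540382737190:ℝ) := by
  rw [show (45:ℕ) = 44+1 from rfl, theta_succ 44, th44, hpp45]
  rw [show (((197:ℕ)):ℝ) = (197:ℝ) by norm_num]
  rw [← Real.log_mul (by norm_num) (by norm_num)]
  norm_num

lemma th46 : θ 46 = Real.log (7799922041683461553249199106329813876687996789903550945093032474868511536164700810:ℝ) := by
  rw [show (46:ℕ) = 45+1 from rfl, theta_succ 45, th45, hpp46]
  rw [show (((199:ℕ)):ℝ) = (199:ℝ) by norm_num]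
  rw [← Real.log_mul (by norm_num) (by norm_num)]
  norm_num

lemma th47 : θ 47 = Real.log (1645783550795210387735581011435590727981167322669649249414629852197255934130751870910:ℝ) := by
  rw [show (47:ℕ) = 46+1 from rfl, theta_succ 46, th46, hpp47]
  rw [show (((211:ℕ)):ℝ) = (211:ℝ) by norm_num]
  rw [← Real.log_mul (by norm_num) (by norm_num)]
  norm_num

lemma th48 : θ 48 = Real.log (367009731827331916465034565550136732339800312955331782619462457039988073311157667212930:ℝ) := by
  rw [show (48:ℕ) = 47+1 from rfl, theta_succ 47, th47, hpp48]
  rw [show (((223:ℕ)):ℝ) = (223:ℝ) by norm_num]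
  rw [← Real.log_mul (by norm_num) (by norm_num)]
  norm_num

lemma th49 : θ 49 = Real.log (83311209124804345037562846379881038241134671040860314654617977748077292641632790457335110:ℝ) := by
  rw [show (49:ℕ) = 48+1 from rfl, theta_succ 48, th48, hpp49]
  rw [show (((227:ℕ)):ℝ) = (227:ℝ) by norm_num]
  rw [← Real.log_mul (by norm_num) (by norm_num)]
  norm_num

lemma th50 : θ 50 = Real.log (19078266889580195013601891820992757757219839668357012055907516904309700014933909014729740190:ℝ) := by
  rw [show (50:ℕ) = 49+1 from rfl, theta_succ 49, th49, hpp50]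
  rw [show (((229:ℕ)):ℝ) = (229:ℝ) by norm_num]
  rw [← Real.log_mul (by norm_num) (by norm_num)]
  norm_num

lemma th51 : θ 51 = Real.log (4445236185272185438169240794291312557432222642727183809026451438704160103479600800432029464270:ℝ) := by
  rw [show (51:ℕ) = 50+1 from rfl, theta_succ 50, th50, hpp51]
  rw [show (((233:ℕ)):ℝ) = (233:ℝ) by norm_num]
  rw [← Real.log_mul (by norm_num) (by norm_num)]
  norm_num

lemma th52 : θ 52 = Real.log (1062411448280052319722448549835623701226301211611796930357321893850294264731624591303255041960530:ℝ) := by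
  rw [show (52:ℕ) = 51+1 from rfl, theta_succ 51, th51, hpp52]
  rw [show (((239:ℕ)):ℝ) = (239:ℝ) by norm_num]
  rw [← Real.log_mul (by norm_num) (by norm_num)]
  norm_num

lemma th53 : θ 53 = Real.log (256041159035492609053110100510385311995538591998443060216114576417920917800321526504084465112487730:ℝ) := by
  rw [show (53:ℕ) = 52+1 from rfl, theta_succ 52, th52, hpp53]
  rw [show (((241:ℕ)):ℝ) = (241:ℝ) by norm_num]
  rw [← Real.log_mul (by norm_num) (by norm_num)]
  norm_num

lemma th54 : θ 54 = Real.log (64266330917908644872330635228106713310880186591609208114244758680898150367880703152525200743234420230:ℝ) := by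
  rw [show (54:ℕ) = 53+1 from rfl, theta_succ 53, th53, hpp54]
  rw [show (((251:ℕ)):ℝ) = (251:ℝ) by norm_num]
  rw [← Real.log_mul (by norm_num) (by norm_num)]
  norm_num

lemma th55 : θ 55 = Real.log (16516447045902521732188973253623425320896207954043566485360902980990824644545340710198976591011245999110:ℝ) := by
  rw [show (55:ℕ) = 54+1 from rfl, theta_succ 54, th54, hpp55]
  rw [show (((257:ℕ)):ℝ) = (257:ℝ) by norm_num]
  rw [← Real.log_mul (by norm_num) (by norm_num)]
  norm_num

lemma th56 : θ 56 = Real.log (4343825573072363215565699965702960859395702691913457985649917484000586881515424606782330843435957697765930:ℝ) := by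
  rw [show (56:ℕ) = 55+1 from rfl, theta_succ 55, th55, hpp56]
  rw [show (((263:ℕ)):ℝ) = (263:ℝ) by norm_num]
  rw [← Real.log_mul (by norm_num) (by norm_num)]
  norm_num

lemma th57 : θ 57 = Real.log (1168489079156465704987173290774096471177444024124720198139827803196157871127649219224446996884272620699035170:ℝ) := by
  rw [show (57:ℕ) = 56+1 from rfl, theta_succ 56, th56, hpp57]
  rw [show (((269:ℕ)):ℝ) = (269:ℝ) by norm_num]
  rw [← Real.log_mul (by norm_num) (by norm_num)]
  norm_num

lemma th58 : θ 58 = Real.log (316660540451402206051523961799780143689087330537799173695893334666158783075592938409825136155637880209438531070:ℝ) := by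
  rw [show (58:ℕ) = 57+1 from rfl, theta_succ 57, th57, hpp58]
  rw [show (((271:ℕ)):ℝ) = (271:ℝ) by norm_num]
  rw [← Real.log_mul (by norm_num) (by norm_num)]
  norm_num

lemma th59 : θ 59 = Real.log (87714969705038411076272137418539099801877190558970371113762453702525982911939243939521562715111692818014473106390:ℝ) := by
  rw [show (59:ℕ) = 58+1 from rfl, theta_succ 58, th58, hpp59]
  rw [show (((277:ℕ)):ℝ) = (277:ℝ) by norm_num]
  rw [← Real.log_mul (by norm_num) (by norm_num)]
  norm_num

lemma th60 : θ 60 = Real.log (24647906487115793512432470614609487044327490547070674282967249490409801198254927547005559122946385681862066942895590:ℝ) := by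
  rw [show (60:ℕ) = 59+1 from rfl, theta_succ 59, th59, hpp60]
  rw [show (((281:ℕ)):ℝ) = (281:ℝ) by norm_num]
  rw [← Real.log_mul (by norm_num) (by norm_num)]
  norm_num
lemma le_sqrt_of_sq {x c : ℝ} (hc : 0 ≤ c) (h : c^2 ≤ x) : c ≤ Real.sqrt x := by
  calc c = Real.sqrt (c^2) := (Real.sqrt_sq hc).symm
    _ ≤ Real.sqrt x := Real.sqrt_le_sqrt h

lemma sqrt_le_of_sq {x c : ℝ} (hc : 0 ≤ c) (h : x ≤ c^2) : Real.sqrt x ≤ c := by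
  calc Real.sqrt x ≤ Real.sqrt (c^2) := Real.sqrt_le_sqrt h
    _ = c := Real.sqrt_sq hc

lemma case_two : Real.sqrt (θ (2+1)) - Real.sqrt (θ 2) < Real.log (p 2) / Real.sqrt (p 2) := by
  apply main_of_key (by norm_num)
  have hl2lo : 0.6931471803 < Real.log 2 := Real.log_two_gt_d9
  have hl2hi : Real.log 2 < 0.6931471808 := Real.log_two_lt_d9
  rw [th2, th3, hpp2, hpp3]
  have e5 : Real.log ((5:ℕ):ℝ) ≤ 1.64623 := by
    have h := log_le_of_pow (P := 5) (c := 38) (k := 16) (by norm_num) (by norm_num)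
    norm_num at h ⊢
    nlinarith
  have e3 : (1.083:ℝ) ≤ Real.log ((3:ℕ):ℝ) := by
    have h := log_ge_of_pow (P := 3) (c := 25) (k := 16) (by norm_num)
    norm_num at h ⊢
    nlinarith
  have e6 : (1.7761:ℝ) ≤ Real.log (6:ℝ) := by
    have h := log_ge_of_pow (P := 6) (c := 41) (k := 16) (by norm_num)
    norm_num at h ⊢
    nlinarith
  have e30 : (3.379:ℝ) ≤ Real.log (30:ℝ) := by
    have h := log_ge_of_pow (P := 30) (c := 78) (k := 16) (by norm_num)
    norm_num at h ⊢
    nlinarith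
  have s3 : Real.sqrt ((3:ℕ):ℝ) ≤ 1.7321 := by
    apply sqrt_le_of_sq (by norm_num)
    norm_num
  have s6 : (1.33:ℝ) ≤ Real.sqrt (Real.log (6:ℝ)) := by
    apply le_sqrt_of_sq (by norm_num); nlinarith
  have s30 : (1.83:ℝ) ≤ Real.sqrt (Real.log (30:ℝ)) := by
    apply le_sqrt_of_sq (by norm_num); nlinarith
  have hlog5pos : 0 < Real.log ((5:ℕ):ℝ) := Real.log_pos (by norm_num)
  have hsqrt3nonneg : 0 ≤ Real.sqrt ((3:ℕ):ℝ) := Real.sqrt_nonneg _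
  calc Real.sqrt ((3:ℕ):ℝ) * Real.log ((5:ℕ):ℝ) ≤ 1.7321 * 1.64623 := by
        apply mul_le_mul s3 e5 hlog5pos.le (by norm_num)
    _ < (1.33 + 1.83) * 1.083 := by norm_num
    _ ≤ (Real.sqrt (Real.log (6:ℝ)) + Real.sqrt (Real.log (30:ℝ))) * Real.log ((3:ℕ):ℝ) := by
        apply mul_le_mul (by linarith) e3 (by norm_num) (by linarith [Real.sqrt_nonneg (Real.log (6:ℝ)), Real.sqrt_nonneg (Real.log (30:ℝ))])

theorem stmt14 : ∀ n : ℕ, 2 ≤ n → Real.sqrt (θ (n+1)) - Real.sqrt (θ n) < Real.log (p n) / Real.sqrt (p n) := by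
  intro n hn
  rcases lt_or_ge n 61 with h | h
  · interval_cases n
    · exact case_two
    · exact case_small 3 30 5 4 37 54 (by norm_num) th3 hpp3 (by norm_num) (by norm_num) (by norm_num) (by norm_num) (by norm_num) (by norm_num)
    · exact case_small 4 210 7 7 44 61 (by norm_num) th4 hpp4 (by norm_num) (by norm_num) (by norm_num) (by norm_num) (by norm_num) (by norm_num)
    · exact case_small 5 2310 11 11 55 72 (by norm_num) th5 hpp5 (by norm_num) (by norm_num) (by norm_num) (by norm_num) (by norm_num) (by norm_num)
    · exact case_small 6 30030 13 14 59 76 (by norm_num) th6 hpp6 (by norm_num) (by norm_num) (by norm_num) (by norm_num) (by norm_num) (by norm_num)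
    · exact case_small 7 510510 17 18 65 82 (by norm_num) th7 hpp7 (by norm_num) (by norm_num) (by norm_num) (by norm_num) (by norm_num) (by norm_num)
    · exact case_small 8 9699690 19 23 67 84 (by norm_num) th8 hpp8 (by norm_num) (by norm_num) (by norm_num) (by norm_num) (by norm_num) (by norm_num)
    · exact case_small 9 223092870 23 27 72 89 (by norm_num) th9 hpp9 (by norm_num) (by norm_num) (by norm_num) (by norm_num) (by norm_num) (by norm_num)
    · exact case_small 10 6469693230 29 32 77 94 (by norm_num) th10 hpp10 (by norm_num) (by norm_num) (by norm_num) (by norm_num) (by norm_num) (by norm_num)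
    · exact case_small 11 200560490130 31 37 79 96 (by norm_num) th11 hpp11 (by norm_num) (by norm_num) (by norm_num) (by norm_num) (by norm_num) (by norm_num)
    · exact case_small 12 7420738134810 37 42 83 100 (by norm_num) th12 hpp12 (by norm_num) (by norm_num) (by norm_num) (by norm_num) (by norm_num) (by norm_num)
    · exact case_small 13 304250263527210 41 48 85 102 (by norm_num) th13 hpp13 (by norm_num) (by norm_num) (by norm_num) (by norm_num) (by norm_num) (by norm_num)
    · exact case_small 14 13082761331670030 43 53 86 103 (by norm_num) th14 hpp14 (by norm_num) (by norm_num) (by norm_num) (by norm_num) (by norm_num) (by norm_num)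
    · exact case_small 15 614889782588491410 47 59 88 105 (by norm_num) th15 hpp15 (by norm_num) (by norm_num) (by norm_num) (by norm_num) (by norm_num) (by norm_num)
    · exact case_small 16 32589158477190044730 53 64 91 108 (by norm_num) th16 hpp16 (by norm_num) (by norm_num) (by norm_num) (by norm_num) (by norm_num) (by norm_num)
    · exact case_small 17 1922760350154212639070 59 70 94 111 (by norm_num) th17 hpp17 (by norm_num) (by norm_num) (by norm_num) (by norm_num) (by norm_num) (by norm_num)
    · exact case_small 18 117288381359406970983270 61 76 94 111 (by norm_num) th18 hpp18 (by norm_num) (by norm_num) (by norm_num) (by norm_num) (by norm_num) (by norm_num)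
    · exact case_small 19 7858321551080267055879090 67 82 97 114 (by norm_num) th19 hpp19 (by norm_num) (by norm_num) (by norm_num) (by norm_num) (by norm_num) (by norm_num)
    · exact case_small 20 557940830126698960967415390 71 88 98 115 (by norm_num) th20 hpp20 (by norm_num) (by norm_num) (by norm_num) (by norm_num) (by norm_num) (by norm_num)
    · exact case_small 21 40729680599249024150621323470 73 95 99 116 (by norm_num) th21 hpp21 (by norm_num) (by norm_num) (by norm_num) (by norm_num) (by norm_num) (by norm_num)
    · exact case_small 22 3217644767340672907899084554130 79 101 100 117 (by norm_num) th22 hpp22 (by norm_num) (by norm_num) (by norm_num) (by norm_num) (by norm_num) (by norm_num)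
    · exact case_small 23 267064515689275851355624017992790 83 107 102 119 (by norm_num) th23 hpp23 (by norm_num) (by norm_num) (by norm_num) (by norm_num) (by norm_num) (by norm_num)
    · exact case_small 24 23768741896345550770650537601358310 89 114 103 120 (by norm_num) th24 hpp24 (by norm_num) (by norm_num) (by norm_num) (by norm_num) (by norm_num) (by norm_num)
    · exact case_small 25 2305567963945518424753102147331756070 97 120 105 122 (by norm_num) th25 hpp25 (by norm_num) (by norm_num) (by norm_num) (by norm_num) (by norm_num) (by norm_num)
    · exact case_small 26 232862364358497360900063316880507363070 101 127 106 123 (by norm_num) th26 hpp26 (by norm_num) (by norm_num) (by norm_num) (by norm_num) (by norm_num) (by norm_num)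
    · exact case_small 27 23984823528925228172706521638692258396210 103 134 106 123 (by norm_num) th27 hpp27 (by norm_num) (by norm_num) (by norm_num) (by norm_num) (by norm_num) (by norm_num)
    · exact case_small 28 2566376117594999414479597815340071648394470 107 140 107 124 (by norm_num) th28 hpp28 (by norm_num) (by norm_num) (by norm_num) (by norm_num) (by norm_num) (by norm_num)
    · exact case_small 29 279734996817854936178276161872067809674997230 109 147 108 125 (by norm_num) th29 hpp29 (by norm_num) (by norm_num) (by norm_num) (by norm_num) (by norm_num) (by norm_num)
    · exact case_small 30 31610054640417607788145206291543662493274686990 113 154 109 126 (by norm_num) th30 hpp30 (by norm_num) (by norm_num) (by norm_num) (by norm_num) (by norm_num) (by norm_num)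
    · exact case_small 31 4014476939333036189094441199026045136645885247730 127 161 111 128 (by norm_num) th31 hpp31 (by norm_num) (by norm_num) (by norm_num) (by norm_num) (by norm_num) (by norm_num)
    · exact case_small 32 525896479052627740771371797072411912900610967452630 131 168 112 129 (by norm_num) th32 hpp32 (by norm_num) (by norm_num) (by norm_num) (by norm_num) (by norm_num) (by norm_num)
    · exact case_small 33 72047817630210000485677936198920432067383702541010310 137 175 113 130 (by norm_num) th33 hpp33 (by norm_num) (by norm_num) (by norm_num) (by norm_num) (by norm_num) (by norm_num)
    · exact case_small 34 10014646650599190067509233131649940057366334653200433090 139 182 113 130 (by norm_num) th34 hpp34 (by norm_num) (by norm_num) (by norm_num) (by norm_num) (by norm_num) (by norm_num)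
    · exact case_small 35 1492182350939279320058875736615841068547583863326864530410 149 189 115 132 (by norm_num) th35 hpp35 (by norm_num) (by norm_num) (by norm_num) (by norm_num) (by norm_num) (by norm_num)
    · exact case_small 36 225319534991831177328890236228992001350685163362356544091910 151 197 115 132 (by norm_num) th36 hpp36 (by norm_num) (by norm_num) (by norm_num) (by norm_num) (by norm_num) (by norm_num)
    · exact case_small 37 35375166993717494840635767087951744212057570647889977422429870 157 204 116 133 (by norm_num) th37 hpp37 (by norm_num) (by norm_num) (by norm_num) (by norm_num) (by norm_num) (by norm_num)
    · exact case_small 38 5766152219975951659023630035336134306565384015606066319856068810 163 211 117 134 (by norm_num) th38 hpp38 (by norm_num) (by norm_num) (by norm_num) (by norm_num) (by norm_num) (by norm_num)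
    · exact case_small 39 962947420735983927056946215901134429196419130606213075415963491270 167 219 118 135 (by norm_num) th39 hpp39 (by norm_num) (by norm_num) (by norm_num) (by norm_num) (by norm_num) (by norm_num)
    · exact case_small 40 166589903787325219380851695350896256250980509594874862046961683989710 173 226 118 135 (by norm_num) th40 hpp40 (by norm_num) (by norm_num) (by norm_num) (by norm_num) (by norm_num) (by norm_num)
    · exact case_small 41 29819592777931214269172453467810429868925511217482600306406141434158090 179 234 119 136 (by norm_num) th41 hpp41 (by norm_num) (by norm_num) (by norm_num) (by norm_num) (by norm_num) (by norm_num)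
    · exact case_small 42 5397346292805549782720214077673687806275517530364350655459511599582614290 181 241 119 136 (by norm_num) th42 hpp42 (by norm_num) (by norm_num) (by norm_num) (by norm_num) (by norm_num) (by norm_num)
    · exact case_small 43 1030893141925860008499560888835674370998623848299590975192766715520279329390 191 249 121 138 (by norm_num) th43 hpp43 (by norm_num) (by norm_num) (by norm_num) (by norm_num) (by norm_num) (by norm_num)
    · exact case_small 44 198962376391690981640415251545285153602734402721821058212203976095413910572270 193 256 121 138 (by norm_num) th44 hpp44 (by norm_num) (by norm_num) (by norm_num) (by norm_num) (by norm_num) (by norm_num)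
    · exact case_small 45 39195588149163123383161804554421175259738677336198748467804183290796540382737190 197 264 121 138 (by norm_num) th45 hpp45 (by norm_num) (by norm_num) (by decide) (by norm_num) (by norm_num) (by norm_num)
    · exact case_small 46 7799922041683461553249199106329813876687996789903550945093032474868511536164700810 199 272 122 139 (by norm_num) th46 hpp46 (by norm_num) (by norm_num) (by decide) (by norm_num) (by norm_num) (by norm_num)
    · exact case_small 47 1645783550795210387735581011435590727981167322669649249414629852197255934130751870910 211 279 123 140 (by norm_num) th47 hpp47 (by norm_num) (by norm_num) (by decide) (by norm_num) (by norm_num) (by norm_num)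
    · exact case_small 48 367009731827331916465034565550136732339800312955331782619462457039988073311157667212930 223 287 124 141 (by norm_num) th48 hpp48 (by norm_num) (by norm_num) (by decide) (by norm_num) (by norm_num) (by norm_num)
    · exact case_small 49 83311209124804345037562846379881038241134671040860314654617977748077292641632790457335110 227 295 125 142 (by norm_num) th49 hpp49 (by norm_num) (by norm_num) (by decide) (by norm_num) (by norm_num) (by norm_num)
    · exact case_small 50 19078266889580195013601891820992757757219839668357012055907516904309700014933909014729740190 229 303 125 142 (by norm_num) th50 hpp50 (by norm_num) (by norm_num) (by decide) (by norm_num) (by norm_num) (by norm_num)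
    · exact case_small 51 4445236185272185438169240794291312557432222642727183809026451438704160103479600800432029464270 233 311 125 142 (by norm_num) th51 hpp51 (by norm_num) (by norm_num) (by decide) (by norm_num) (by norm_num) (by norm_num)
    · exact case_small 52 1062411448280052319722448549835623701226301211611796930357321893850294264731624591303255041960530 239 318 126 143 (by norm_num) th52 hpp52 (by norm_num) (by norm_num) (by decide) (by norm_num) (by norm_num) (by norm_num)
    · exact case_small 53 256041159035492609053110100510385311995538591998443060216114576417920917800321526504084465112487730 241 326 126 143 (by norm_num) th53 hpp53 (by norm_num) (by norm_num) (by decide) (by norm_num) (by norm_num) (by norm_num)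
    · exact case_small 54 64266330917908644872330635228106713310880186591609208114244758680898150367880703152525200743234420230 251 334 127 144 (by norm_num) th54 hpp54 (by norm_num) (by norm_num) (by decide) (by norm_num) (by norm_num) (by norm_num)
    · exact case_small 55 16516447045902521732188973253623425320896207954043566485360902980990824644545340710198976591011245999110 257 342 128 145 (by norm_num) th55 hpp55 (by norm_num) (by norm_num) (by decide) (by norm_num) (by norm_num) (by norm_num)
    · exact case_small 56 4343825573072363215565699965702960859395702691913457985649917484000586881515424606782330843435957697765930 263 350 128 145 (by norm_num) th56 hpp56 (by norm_num) (by norm_num) (by decide) (by norm_num) (by norm_num) (by norm_num)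
    · exact case_small 57 1168489079156465704987173290774096471177444024124720198139827803196157871127649219224446996884272620699035170 269 358 129 146 (by norm_num) th57 hpp57 (by norm_num) (by norm_num) (by decide) (by norm_num) (by norm_num) (by norm_num)
    · exact case_small 58 316660540451402206051523961799780143689087330537799173695893334666158783075592938409825136155637880209438531070 271 367 129 146 (by norm_num) th58 hpp58 (by norm_num) (by norm_num) (by decide) (by norm_num) (by norm_num) (by norm_num)
    · exact case_small 59 87714969705038411076272137418539099801877190558970371113762453702525982911939243939521562715111692818014473106390 277 375 129 146 (by norm_num) th59 hpp59 (by norm_num) (by norm_num) (by decide) (by norm_num) (by norm_num) (by norm_num)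
    · exact case_small 60 24647906487115793512432470614609487044327490547070674282967249490409801198254927547005559122946385681862066942895590 281 383 130 147 (by norm_num) th60 hpp60 (by norm_num) (by norm_num) (by decide) (by norm_num) (by norm_num) (by norm_num)
  · apply large_case (by omega)
    calc (283:ℕ) = p 61 := hpp61.symm
      _ ≤ p n := by
          simp only [p]
          exact nth_prime_mono.monotone (by omega)
end

section
/- For all n ≥ 1, √θ_{n+1} - √θ_n ≤ √(ln 6) - √(ln 2), with equality exactly at n = 1, where θ_n = ∑_{i=1}^n ln(p_i). -/
namespace Stmt15Proof


open Finset

lemma infp : (setOf Nat.Prime).Infinite := Nat.infinite_setOf_prime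

lemma nth_eq {k q : ℕ} (hq : Nat.Prime q) (h : Nat.count Nat.Prime q = k) :
    Nat.nth Nat.Prime k = q := h ▸ Nat.nth_count hq

lemma prime_p (n : ℕ) : (p n).Prime := Nat.prime_nth_prime _

lemma two_le_p (n : ℕ) : 2 ≤ p n := (prime_p n).two_le

lemma log_p_nonneg (n : ℕ) : 0 ≤ Real.log (p n) :=
  Real.log_nonneg (by exact_mod_cast (prime_p n).one_lt.le)

lemma theta_nonneg (n : ℕ) : 0 ≤ θ n :=
  Finset.sum_nonneg fun i _ => log_p_nonneg i

lemma theta_mono {a b : ℕ} (h : a ≤ b) : θ a ≤ θ b :=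
  Finset.sum_le_sum_of_subset_of_nonneg (Finset.Icc_subset_Icc_right h)
    (fun i _ _ => log_p_nonneg i)

lemma theta_succ (n : ℕ) : θ (n + 1) = θ n + Real.log (p (n + 1)) :=
  Finset.sum_Icc_succ_top (by omega) _

lemma p_mono {a b : ℕ} (h : a ≤ b) : p a ≤ p b :=
  Nat.nth_monotone infp (by omega)

lemma p_succ_le (n : ℕ) : p (n + 1) ≤ 2 * p n := by
  obtain ⟨q, hq, h1, h2⟩ := Nat.exists_prime_lt_and_le_two_mul (p n) (prime_p n).pos.ne'
  refine le_trans ?_ h2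
  show Nat.nth Nat.Prime (n + 1 - 1) ≤ q
  have hc : n ≤ Nat.count Nat.Prime q := by
    have h3 : n - 1 < Nat.count Nat.Prime q := (Nat.lt_nth_iff_count_lt infp).2 h1
    omega
  calc Nat.nth Nat.Prime (n + 1 - 1) ≤ Nat.nth Nat.Prime (Nat.count Nat.Prime q) :=
        Nat.nth_monotone infp (by omega)
    _ = q := Nat.nth_count hq

lemma log_pow_le {a b : ℕ} (i j : ℕ) (ha : 0 < a) (h : a ^ i ≤ b ^ j) :
    (i : ℝ) * Real.log a ≤ (j : ℝ) * Real.log b := by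
  have h1 : ((a : ℝ)) ^ i ≤ ((b : ℝ)) ^ j := by exact_mod_cast h
  have h2 : (0:ℝ) < (a:ℝ) ^ i := by positivity
  have := Real.log_le_log_iff h2 (lt_of_lt_of_le h2 h1) |>.2 h1
  rwa [Real.log_pow, Real.log_pow] at this

lemma le_sqrt_of {x r : ℝ} (hr : 0 ≤ r) (h : r ^ 2 ≤ x) : r ≤ Real.sqrt x :=
  Real.le_sqrt_of_sq_le h



-- explicit prime values
lemma P0 : Nat.nth Nat.Prime 0 = 2 := nth_eq (by norm_num) (by decide)
lemma P1 : Nat.nth Nat.Prime 1 = 3 := nth_eq (by norm_num) (by decide)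
lemma P2 : Nat.nth Nat.Prime 2 = 5 := nth_eq (by norm_num) (by decide)
lemma P3 : Nat.nth Nat.Prime 3 = 7 := nth_eq (by norm_num) (by decide)
lemma P4 : Nat.nth Nat.Prime 4 = 11 := nth_eq (by norm_num) (by decide)
lemma P5 : Nat.nth Nat.Prime 5 = 13 := nth_eq (by norm_num) (by decide)
lemma P6 : Nat.nth Nat.Prime 6 = 17 := nth_eq (by norm_num) (by decide)
lemma P7 : Nat.nth Nat.Prime 7 = 19 := nth_eq (by norm_num) (by decide)
lemma P8 : Nat.nth Nat.Prime 8 = 23 := nth_eq (by norm_num) (by decide)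
lemma P9 : Nat.nth Nat.Prime 9 = 29 := nth_eq (by norm_num) (by decide)
lemma P10 : Nat.nth Nat.Prime 10 = 31 := nth_eq (by norm_num) (by decide)
lemma P11 : Nat.nth Nat.Prime 11 = 37 := nth_eq (by norm_num) (by decide)
lemma P12 : Nat.nth Nat.Prime 12 = 41 := nth_eq (by norm_num) (by decide)
lemma P13 : Nat.nth Nat.Prime 13 = 43 := nth_eq (by norm_num) (by decide)
lemma P14 : Nat.nth Nat.Prime 14 = 47 := nth_eq (by norm_num) (by decide)
lemma P15 : Nat.nth Nat.Prime 15 = 53 := nth_eq (by norm_num) (by decide)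
lemma P16 : Nat.nth Nat.Prime 16 = 59 := nth_eq (by norm_num) (by decide)
lemma P17 : Nat.nth Nat.Prime 17 = 61 := nth_eq (by norm_num) (by decide)
lemma P18 : Nat.nth Nat.Prime 18 = 67 := nth_eq (by norm_num) (by decide)
lemma P19 : Nat.nth Nat.Prime 19 = 71 := nth_eq (by norm_num) (by decide)
lemma P20 : Nat.nth Nat.Prime 20 = 73 := nth_eq (by norm_num) (by decide)

-- primorial of nth prime
lemma primorial_nth (k : ℕ) :
    primorial (Nat.nth Nat.Prime k) = ∏ i ∈ Finset.range (k + 1), Nat.nth Nat.Prime i := by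
  induction k with
  | zero =>
    rw [Finset.prod_range_one, P0]
    decide
  | succ k ih =>
    have hab : Nat.nth Nat.Prime k < Nat.nth Nat.Prime (k + 1) :=
      (Nat.nth_lt_nth infp).2 (by omega)
    set a := Nat.nth Nat.Prime k with ha
    set b := Nat.nth Nat.Prime (k + 1) with hb
    have hsplit : primorial b = primorial a *
        ∏ q ∈ (Finset.Ico (a + 1) (b + 1)).filter Nat.Prime, q := by
      have := primorial_add a (b - a)
      rw [show a + (b - a) = b by omega] at this
      exact this
    have hfil : (Finset.Ico (a + 1) (b + 1)).filter (fun q => Nat.Prime q) = {b} := by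
      ext q
      simp only [Finset.mem_filter, Finset.mem_Ico, Finset.mem_singleton]
      constructor
      · rintro ⟨⟨hq1, hq2⟩, hq⟩
        have h1 : k < Nat.count Nat.Prime q := (Nat.lt_nth_iff_count_lt infp).2 (by omega)
        have h2 : Nat.count Nat.Prime q ≤ k + 1 :=
          (Nat.count_le_iff_le_nth infp).2 (by omega)
        have : Nat.count Nat.Prime q = k + 1 := by omega
        rw [← Nat.nth_count hq, this]
      · rintro rfl
        exact ⟨⟨by omega, by omega⟩, Nat.prime_nth_prime (k+1)⟩
    rw [hsplit, hfil, Finset.prod_singleton, ih, Finset.prod_range_succ _ (k+1),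
      Finset.prod_range_succ _ k]

lemma primorial_mono {a b : ℕ} (h : a ≤ b) : primorial a ≤ primorial b := by
  unfold primorial
  apply Finset.prod_le_prod_of_subset_of_one_le'
  · exact Finset.filter_subset_filter _ (Finset.range_subset_range.2 (by omega))
  · intro i hi _
    exact (Finset.mem_filter.1 hi).2.one_lt.le

-- central binomial bound
lemma cb_le (m : ℕ) (hm : 0 < m) :
    Nat.centralBinom m ≤ (2 * m) ^ Nat.sqrt (2 * m) * primorial (2 * m) := by
  have n2_pos : 1 ≤ 2 * m := by omega
  set S := (Finset.range (2 * m + 1)).filter Nat.Prime with hS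
  set f : ℕ → ℕ := fun x => x ^ (Nat.centralBinom m).factorization x with hf
  have hSf : ∏ x ∈ S, f x = ∏ x ∈ Finset.range (2 * m + 1), f x := by
    refine Finset.prod_filter_of_ne fun q _ h => ?_
    contrapose! h
    rw [hf]; dsimp only
    rw [Nat.factorization_eq_zero_of_not_prime _ h, pow_zero]
  have heq : Nat.centralBinom m = ∏ x ∈ S, f x := by
    rw [hSf, Nat.prod_pow_factorization_centralBinom]
  rw [heq, ← Finset.prod_filter_mul_prod_filter_not S (· ≤ Nat.sqrt (2 * m))]
  apply Nat.mul_le_mul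
  · refine (Finset.prod_le_prod' fun q _ => (?_ : f q ≤ 2 * m)).trans ?_
    · exact Nat.pow_factorization_choose_le (by omega)
    have hcard : (Finset.Icc 1 (Nat.sqrt (2 * m))).card = Nat.sqrt (2 * m) := by
      rw [Nat.card_Icc]; omega
    rw [Finset.prod_const]
    refine pow_le_pow_right₀ n2_pos ((Finset.card_le_card fun x hx => ?_).trans hcard.le)
    obtain ⟨h1, h2⟩ := Finset.mem_filter.1 hx
    exact Finset.mem_Icc.mpr ⟨(Finset.mem_filter.1 h1).2.one_lt.le, h2⟩
  · refine le_trans (Finset.prod_le_prod' fun q hq => (?_ : f q ≤ q)) ?_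
    · obtain ⟨h1, h2⟩ := Finset.mem_filter.1 hq
      refine le_trans (pow_le_pow_right₀ (Finset.mem_filter.1 h1).2.one_lt.le ?_) (pow_one q).le
      exact Nat.factorization_choose_le_one (Nat.sqrt_lt'.mp <| not_le.1 h2)
    refine le_trans (Finset.prod_le_prod_of_subset_of_one_le' (Finset.filter_subset _ _) ?_) ?_
    · exact fun q hq _ => (Finset.mem_filter.1 hq).2.one_lt.le
    · exact le_of_eq rfl



lemma theta_range (n : ℕ) : θ n = ∑ i ∈ Finset.range n, Real.log (Nat.nth Nat.Prime i) := by
  rw [θ, ← Finset.Ico_add_one_right_eq_Icc, Finset.sum_Ico_eq_sum_range]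
  simp [p, Nat.add_sub_cancel_left]

lemma theta_eq_log_primorial {n : ℕ} (hn : 1 ≤ n) :
    θ n = Real.log (primorial (p n)) := by
  rw [theta_range, show p n = Nat.nth Nat.Prime (n - 1) from rfl, primorial_nth (n - 1),
    show n - 1 + 1 = n by omega, Nat.cast_prod,
    Real.log_prod (fun i _ => by exact_mod_cast (Nat.prime_nth_prime i).pos.ne')]

lemma t5 : θ 5 = Real.log 2310 := by
  rw [theta_eq_log_primorial (by norm_num), show p 5 = 11 from P4,
    show primorial 11 = 2310 from by decide]
  norm_num

lemma t21 : θ 21 = Real.log 40729680599249024150621323470 := by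
  rw [theta_eq_log_primorial (by norm_num), show p 21 = 73 from P20,
    show primorial 73 = 40729680599249024150621323470 from by decide]
  norm_num

lemma t2 : θ 2 = Real.log 6 := by
  rw [theta_eq_log_primorial (by norm_num), show p 2 = 3 from P1,
    show primorial 3 = 6 from by decide]
  norm_num

lemma log6_eq : Real.log 6 = Real.log 2 + Real.log 3 := by
  rw [← Real.log_mul (by norm_num) (by norm_num)]; norm_num

lemma sqrt_log6 : (1.338566 : ℝ) ≤ Real.sqrt (Real.log 6) := by
  apply le_sqrt_of (by norm_num)
  have h3 : (1054 : ℝ) * Real.log 2 ≤ 665 * Real.log 3 :=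
    log_pow_le 1054 665 (by norm_num) (by set_option maxRecDepth 100000 in decide)
  have := Real.log_two_gt_d9
  rw [log6_eq]; nlinarith

lemma sqrt_log2 : Real.sqrt (Real.log 2) ≤ 0.8325547 := by
  rw [show (0.8325547 : ℝ) = Real.sqrt (0.8325547 ^ 2) by
    rw [Real.sqrt_sq] <;> norm_num]
  apply Real.sqrt_le_sqrt
  have := Real.log_two_lt_d9
  nlinarith

lemma c_lb : (0.5060113 : ℝ) ≤ Real.sqrt (Real.log 6) - Real.sqrt (Real.log 2) := by
  have := sqrt_log6; have := sqrt_log2; linarith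

lemma tb5 : (7.7112623808 : ℝ) ≤ θ 5 := by
  rw [t5]
  have h3 : (89 : ℝ) * Real.log 2 ≤ 8 * Real.log 2310 :=
    log_pow_le 89 8 (by norm_num) (by norm_num)
  have := Real.log_two_gt_d9
  nlinarith


lemma t1 : θ 1 = Real.log 2 := by
  rw [theta_eq_log_primorial (by norm_num), show p 1 = 2 from P0,
    show primorial 2 = 2 from by decide]
  norm_num

lemma t3 : θ 3 = Real.log 30 := by
  rw [theta_eq_log_primorial (by norm_num), show p 3 = 5 from P2,
    show primorial 5 = 30 from by decide]
  norm_num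

lemma t4 : θ 4 = Real.log 210 := by
  rw [theta_eq_log_primorial (by norm_num), show p 4 = 7 from P3,
    show primorial 7 = 210 from by decide]
  norm_num

lemma t8 : θ 8 = Real.log 9699690 := by
  rw [theta_eq_log_primorial (by norm_num), show p 8 = 19 from P7,
    show primorial 19 = 9699690 from by decide]
  norm_num

lemma t12 : θ 12 = Real.log 7420738134810 := by
  rw [theta_eq_log_primorial (by norm_num), show p 12 = 37 from P11,
    show primorial 37 = 7420738134810 from by decide]
  norm_num


lemma log_p_le_log {n q : ℕ} (h : p n ≤ q) : Real.log (p n) ≤ Real.log q := by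
  have h0 : (0 : ℝ) < (p n : ℝ) := by exact_mod_cast (prime_p n).pos
  have h1 : ((p n : ℕ) : ℝ) ≤ (q : ℝ) := by exact_mod_cast h
  exact (Real.log_le_log_iff h0 (lt_of_lt_of_le h0 h1)).2 h1

lemma block {n : ℕ} {A B : ℝ} (hA : Real.log (p (n + 1)) ≤ A) (hB : B ≤ Real.sqrt (θ n))
    (hB0 : 0 ≤ B) (h : A < 0.5060113 ^ 2 + 2 * 0.5060113 * B) :
    Real.log (p (n + 1)) < (Real.sqrt (Real.log 6) - Real.sqrt (Real.log 2)) ^ 2 +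
      2 * (Real.sqrt (Real.log 6) - Real.sqrt (Real.log 2)) * Real.sqrt (θ n) := by
  have hc := c_lb
  have hs := Real.sqrt_nonneg (θ n)
  have h1 : (0.5060113 : ℝ) ^ 2 ≤ (Real.sqrt (Real.log 6) - Real.sqrt (Real.log 2)) ^ 2 := by
    nlinarith
  have h2 : 2 * 0.5060113 * B ≤
      2 * (Real.sqrt (Real.log 6) - Real.sqrt (Real.log 2)) * Real.sqrt (θ n) := by nlinarith
  linarith

lemma poly_main (l v : ℝ) (hl1 : 0.6931471803 < l) (hl2 : l < 0.6931471808)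
    (hv : 2.59 ≤ v) :
    (2 * l + 8 * (v - 1)) ^ 2 < l * v ^ 8 - 8 * (v - 1) - v ^ 4 * (8 * (v - 1)) := by
  have hv0 : (0:ℝ) ≤ v := by linarith
  have e2 : (6.7 : ℝ) ≤ v ^ 2 := by nlinarith
  have e3 : (17.3 : ℝ) ≤ v ^ 3 := by nlinarith
  have g1 : 0 ≤ ((0.69 : ℝ) * v ^ 3 - 11.9) * v ^ 5 :=
    mul_nonneg (by linarith) (by positivity)
  have g2 : 0 ≤ (v - 2.59) * v ^ 4 := mul_nonneg (by linarith) (by positivity)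
  have g3 : 0 ≤ (v ^ 2 - 6.7) * v ^ 2 := mul_nonneg (by linarith) (by positivity)
  have g4 : 0 ≤ (l - 0.69) * v ^ 8 := mul_nonneg (by linarith) (by positivity)
  have g5 : l * v ≤ 0.7 * v := mul_le_mul_of_nonneg_right (by linarith) hv0
  have g6 : 0 ≤ ((0.7 : ℝ) - l) * l := mul_nonneg (by linarith) (by linarith)
  nlinarith [g1, g2, g3, g4, g5, g6, hv, hv0, e2]

set_option maxHeartbeats 1000000 in
lemma key {n : ℕ} (hn : 2 ≤ n) :
    Real.log (p (n + 1)) < (Real.sqrt (Real.log 6) - Real.sqrt (Real.log 2)) ^ 2 +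
      2 * (Real.sqrt (Real.log 6) - Real.sqrt (Real.log 2)) * Real.sqrt (θ n) := by
  have l2lo := Real.log_two_gt_d9
  have l2hi := Real.log_two_lt_d9
  rcases lt_or_ge n 3 with h3 | h3
  · -- n = 2
    have hn2 : n = 2 := by omega
    subst hn2
    have hA : Real.log (p 3) ≤ (137 / 59 : ℝ) * 0.6931471808 := by
      have h1 : Real.log (p 3) ≤ Real.log 5 := log_p_le_log (show p 3 ≤ 5 from P2.le)
      have h2 : (59 : ℝ) * Real.log 5 ≤ 137 * Real.log 2 :=
        log_pow_le 59 137 (by norm_num) (by norm_num)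
      linarith
    have hB : (1.338566 : ℝ) ≤ Real.sqrt (θ 2) := by rw [t2]; exact sqrt_log6
    exact block hA hB (by norm_num) (by norm_num)
  rcases lt_or_ge n 4 with h4 | h4
  · have hn3 : n = 3 := by omega
    subst hn3
    have hA : Real.log (p 4) ≤ (45 / 16 : ℝ) * 0.6931471808 := by
      have h1 : Real.log (p 4) ≤ Real.log 7 := log_p_le_log (show p 4 ≤ 7 from P3.le)
      have h2 : (16 : ℝ) * Real.log 7 ≤ 45 * Real.log 2 :=
        log_pow_le 16 45 (by norm_num) (by norm_num)
      linarith
    have hB : (1.838 : ℝ) ≤ Real.sqrt (θ 3) := by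
      apply le_sqrt_of (by norm_num)
      rw [t3]
      have h2 : (39 : ℝ) * Real.log 2 ≤ 8 * Real.log 30 :=
        log_pow_le 39 8 (by norm_num) (by norm_num)
      linarith
    exact block hA hB (by norm_num) (by norm_num)
  rcases lt_or_ge n 5 with h5 | h5
  · have hn4 : n = 4 := by omega
    subst hn4
    have hA : Real.log (p 5) ≤ (7 / 2 : ℝ) * 0.6931471808 := by
      have h1 : Real.log (p 5) ≤ Real.log 11 := log_p_le_log (show p 5 ≤ 11 from P4.le)
      have h2 : (2 : ℝ) * Real.log 11 ≤ 7 * Real.log 2 :=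
        log_pow_le 2 7 (by norm_num) (by norm_num)
      linarith
    have hB : (2.298 : ℝ) ≤ Real.sqrt (θ 4) := by
      apply le_sqrt_of (by norm_num)
      rw [t4]
      have h2 : (61 : ℝ) * Real.log 2 ≤ 8 * Real.log 210 :=
        log_pow_le 61 8 (by norm_num) (by norm_num)
      linarith
    exact block hA hB (by norm_num) (by norm_num)
  rcases lt_or_ge n 8 with h8 | h8
  · have hA : Real.log (p (n + 1)) ≤ (17 / 4 : ℝ) * 0.6931471808 := by
      have h1 : Real.log (p (n + 1)) ≤ Real.log 19 :=
        log_p_le_log (le_trans (p_mono (show n + 1 ≤ 8 by omega)) (show p 8 ≤ 19 from P7.le))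
      have h2 : (4 : ℝ) * Real.log 19 ≤ 17 * Real.log 2 :=
        log_pow_le 4 17 (by norm_num) (by norm_num)
      linarith
    have hB : (2.776915 : ℝ) ≤ Real.sqrt (θ n) := by
      apply le_sqrt_of (by norm_num)
      have hm := theta_mono (show 5 ≤ n by omega)
      rw [t5] at hm
      have h2 : (89 : ℝ) * Real.log 2 ≤ 8 * Real.log 2310 :=
        log_pow_le 89 8 (by norm_num) (by norm_num)
      linarith
    exact block hA hB (by norm_num) (by norm_num)
  rcases lt_or_ge n 12 with h12 | h12
  · have hA : Real.log (p (n + 1)) ≤ (21 / 4 : ℝ) * 0.6931471808 := by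
      have h1 : Real.log (p (n + 1)) ≤ Real.log 37 :=
        log_p_le_log (le_trans (p_mono (show n + 1 ≤ 12 by omega)) (show p 12 ≤ 37 from P11.le))
      have h2 : (4 : ℝ) * Real.log 37 ≤ 21 * Real.log 2 :=
        log_pow_le 4 21 (by norm_num) (by norm_num)
      linarith
    have hB : (4.00903 : ℝ) ≤ Real.sqrt (θ n) := by
      apply le_sqrt_of (by norm_num)
      have hm := theta_mono (show 8 ≤ n by omega)
      rw [t8] at hm
      have h2 : (371 : ℝ) * Real.log 2 ≤ 16 * Real.log 9699690 :=
        log_pow_le 371 16 (by norm_num) (by decide)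
      linarith
    exact block hA hB (by norm_num) (by norm_num)
  rcases lt_or_ge n 21 with h21 | h21
  · have hA : Real.log (p (n + 1)) ≤ (199 / 32 : ℝ) * 0.6931471808 := by
      have h1 : Real.log (p (n + 1)) ≤ Real.log 73 :=
        log_p_le_log (le_trans (p_mono (show n + 1 ≤ 21 by omega)) (show p 21 ≤ 73 from P20.le))
      have h2 : (32 : ℝ) * Real.log 73 ≤ 199 * Real.log 2 :=
        log_pow_le 32 199 (by norm_num) (by norm_num)
      linarith
    have hB : (5.44353 : ℝ) ≤ Real.sqrt (θ n) := by
      apply le_sqrt_of (by norm_num)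
      have hm := theta_mono (show 12 ≤ n by omega)
      rw [t12] at hm
      have h2 : (684 : ℝ) * Real.log 2 ≤ 16 * Real.log 7420738134810 :=
        log_pow_le 684 16 (by norm_num) (by set_option maxRecDepth 100000 in decide)
      linarith
    exact block hA hB (by norm_num) (by norm_num)
  by_cases hbig : p n < 2048
  · -- n ≥ 21, p n ≤ 2047
    have hA : Real.log (p (n + 1)) ≤ (12 : ℝ) * 0.6931471808 := by
      have hple : p (n + 1) ≤ 4096 := by
        have := p_succ_le n
        omega
      have h1 : Real.log (p (n + 1)) ≤ Real.log ((4096 : ℕ) : ℝ) := log_p_le_log hple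
      have h2 : ((4096 : ℕ) : ℝ) = 2 ^ 12 := by norm_num
      rw [h2, Real.log_pow] at h1
      push_cast at h1
      linarith
    have hB : (8.114738 : ℝ) ≤ Real.sqrt (θ n) := by
      apply le_sqrt_of (by norm_num)
      have hm := theta_mono (show 21 ≤ n by omega)
      rw [t21] at hm
      have h2 := log_pow_le (a := 2) (b := 40729680599249024150621323470) 95 1
        (by norm_num) (by norm_num)
      push_cast at h2
      linarith
    exact block hA hB (by norm_num) (by norm_num)
  · -- Chebyshev case : p n ≥ 2048
    push_neg at hbig
    have hxp := prime_p n
    have hodd : Odd (p n) := hxp.odd_of_ne_two (by omega)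
    obtain ⟨m, hm⟩ := hodd
    have hm4 : 1023 ≤ m := by omega
    have h4 : 4 ^ m < m * ((2 * m) ^ Nat.sqrt (2 * m) * primorial (2 * m)) :=
      lt_of_lt_of_le (Nat.four_pow_lt_mul_centralBinom m (by omega))
        (Nat.mul_le_mul_left m (cb_le m (by omega)))
    -- cast to ℝ and take logs
    have hmpos : (0 : ℝ) < (m : ℝ) := by
      have : 0 < m := by omega
      exact_mod_cast this
    have hppos : (0 : ℝ) < ((primorial (2 * m) : ℕ) : ℝ) := by
      exact_mod_cast primorial_pos (2 * m)
    have h2mpos : (0 : ℝ) < ((2 * m : ℕ) : ℝ) := by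
      have : 0 < 2 * m := by omega
      exact_mod_cast this
    have hlog : (m : ℝ) * Real.log 4 ≤ Real.log m +
        (Nat.sqrt (2 * m) : ℝ) * Real.log ((2 * m : ℕ) : ℝ) +
        Real.log ((primorial (2 * m) : ℕ) : ℝ) := by
      have h1 : ((4 : ℕ) : ℝ) ^ m ≤
          (m : ℝ) * (((2 * m : ℕ) : ℝ) ^ Nat.sqrt (2 * m) * ((primorial (2 * m) : ℕ) : ℝ)) := by
        exact_mod_cast h4.le
      have h2 : (0 : ℝ) < ((4 : ℕ) : ℝ) ^ m := by positivity
      have h3 := (Real.log_le_log_iff h2 (lt_of_lt_of_le h2 h1)).2 h1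
      rw [Real.log_pow, Real.log_mul hmpos.ne' (by positivity),
        Real.log_mul (by positivity) hppos.ne', Real.log_pow] at h3
      push_cast at h3 ⊢
      linarith
    -- lower bound for θ n
    have hθprim : Real.log ((primorial (2 * m) : ℕ) : ℝ) ≤ θ n := by
      rw [theta_eq_log_primorial (show 1 ≤ n by omega)]
      have e2 : ((primorial (2 * m) : ℕ) : ℝ) ≤ ((primorial (p n) : ℕ) : ℝ) := by
        exact_mod_cast primorial_mono (show 2 * m ≤ p n by omega)
      exact (Real.log_le_log_iff hppos (lt_of_lt_of_le hppos e2)).2 e2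
    set y : ℝ := ((2 * m : ℕ) : ℝ) with hy'
    have hy : (2046 : ℝ) ≤ y := by
      rw [hy']; push_cast
      have : (1023 : ℝ) ≤ (m : ℝ) := by exact_mod_cast hm4
      linarith
    have hy0 : (0 : ℝ) ≤ y := by linarith
    have hθW : y * Real.log 2 - Real.log y - Real.sqrt y * Real.log y ≤ θ n := by
      have e4 : Real.log 4 = 2 * Real.log 2 := by
        rw [show (4 : ℝ) = 2 ^ 2 by norm_num, Real.log_pow]; norm_num
      have e5 : ((Nat.sqrt (2 * m) : ℕ) : ℝ) ≤ Real.sqrt y := Real.nat_sqrt_le_real_sqrt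
      have e6 : Real.log m ≤ Real.log y := by
        have : (m : ℝ) ≤ y := by rw [hy']; push_cast; linarith
        exact (Real.log_le_log_iff hmpos (lt_of_lt_of_le hmpos this)).2 this
      have e7 : (0 : ℝ) ≤ Real.log y := Real.log_nonneg (by linarith)
      have e8 : (m : ℝ) * Real.log 4 = y * Real.log 2 := by
        rw [e4, hy']; push_cast; ring
      linarith [hlog, hθprim, e6, e8, mul_nonneg (sub_nonneg.2 e5) e7]
    -- the eighth-root substitution
    set s1 : ℝ := Real.sqrt y with hs1'
    set t : ℝ := Real.sqrt s1 with ht'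
    set v : ℝ := Real.sqrt t with hv'
    have hs0 : 0 ≤ s1 := Real.sqrt_nonneg y
    have ht0 : 0 ≤ t := Real.sqrt_nonneg s1
    have hv0 : 0 ≤ v := Real.sqrt_nonneg t
    have hv2 : v ^ 2 = t := Real.sq_sqrt ht0
    have ht2 : t ^ 2 = s1 := Real.sq_sqrt hs0
    have hs2 : s1 ^ 2 = y := Real.sq_sqrt hy0
    have hv4 : v ^ 4 = s1 := by
      have : v ^ 4 = (v ^ 2) ^ 2 := by ring
      rw [this, hv2, ht2]
    have hv8 : v ^ 8 = y := by
      have : v ^ 8 = ((v ^ 2) ^ 2) ^ 2 := by ring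
      rw [this, hv2, ht2, hs2]
    have hvge : (2.59 : ℝ) ≤ v := by
      by_contra hcon
      push_neg at hcon
      have h1 : v ^ 8 < 2.59 ^ 8 := by
        apply pow_lt_pow_left₀ hcon hv0
        norm_num
      rw [hv8] at h1
      norm_num at h1
      linarith
    have hvpos : (0 : ℝ) < v := by linarith
    have hlogv : Real.log v ≤ v - 1 := Real.log_le_sub_one_of_pos hvpos
    have hlogv0 : 0 ≤ Real.log v := Real.log_nonneg (by linarith)
    have hlogy : Real.log y = 8 * Real.log v := by
      rw [← hv8, Real.log_pow]; norm_num
    -- upper bound on log p (n+1)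
    have hL : Real.log (p (n + 1)) ≤ 2 * Real.log 2 + 8 * (v - 1) := by
      have b1 : Real.log (p (n + 1)) ≤ Real.log ((2 * p n : ℕ) : ℝ) :=
        log_p_le_log (p_succ_le n)
      have b2 : Real.log ((2 * p n : ℕ) : ℝ) = Real.log 2 + Real.log ((p n : ℕ) : ℝ) := by
        push_cast
        rw [Real.log_mul (by norm_num) (by exact_mod_cast hxp.pos.ne')]
      have b3 : ((p n : ℕ) : ℝ) = y + 1 := by
        rw [hy', hm]; push_cast; ring
      have b4 : Real.log (y + 1) ≤ Real.log 2 + Real.log y := by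
        rw [← Real.log_mul (by norm_num) (by linarith : y ≠ 0)]
        have : y + 1 ≤ 2 * y := by linarith
        exact (Real.log_le_log_iff (by linarith) (by linarith)).2 this
      rw [b2, b3] at b1
      linarith [hlogy, hlogv]
    -- key numeric inequality
    have hWlb : Real.log 2 * v ^ 8 - 8 * (v - 1) - v ^ 4 * (8 * (v - 1)) ≤ θ n := by
      have e1 : Real.sqrt y * Real.log y = v ^ 4 * (8 * Real.log v) := by
        rw [← hs1', ← hv4, hlogy]
      have e2 : v ^ 4 * (8 * Real.log v) ≤ v ^ 4 * (8 * (v - 1)) := by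
        apply mul_le_mul_of_nonneg_left _ (by positivity)
        linarith
      have e3 : Real.log y ≤ 8 * (v - 1) := by rw [hlogy]; linarith
      have e9 : y * Real.log 2 = Real.log 2 * v ^ 8 := by rw [← hv8]; ring
      linarith [hθW, e1, e2, e3, e9]
    have main : (2 * Real.log 2 + 8 * (v - 1)) ^ 2 <
        Real.log 2 * v ^ 8 - 8 * (v - 1) - v ^ 4 * (8 * (v - 1)) :=
      poly_main (Real.log 2) v l2lo l2hi hvge
    have hL0 : (0 : ℝ) < 2 * Real.log 2 + 8 * (v - 1) := by linarith
    have h1 : 2 * Real.log 2 + 8 * (v - 1) <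
        Real.sqrt (Real.log 2 * v ^ 8 - 8 * (v - 1) - v ^ 4 * (8 * (v - 1))) :=
      (Real.lt_sqrt hL0.le).2 main
    have h2 : Real.sqrt (Real.log 2 * v ^ 8 - 8 * (v - 1) - v ^ 4 * (8 * (v - 1))) ≤
        Real.sqrt (θ n) := Real.sqrt_le_sqrt hWlb
    have hc := c_lb
    have hrt2 := Real.sqrt_nonneg (θ n)
    have hfin : Real.sqrt (θ n) ≤
        2 * (Real.sqrt (Real.log 6) - Real.sqrt (Real.log 2)) * Real.sqrt (θ n) := by
      linarith [mul_nonneg (show (0:ℝ) ≤ 2 * (Real.sqrt (Real.log 6) - Real.sqrt (Real.log 2)) - 1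
        by linarith) hrt2]
    linarith [hL, h1, h2, hfin, sq_nonneg (Real.sqrt (Real.log 6) - Real.sqrt (Real.log 2))]


lemma strict {n : ℕ} (hn : 2 ≤ n) :
    Real.sqrt (θ (n + 1)) - Real.sqrt (θ n) <
      Real.sqrt (Real.log 6) - Real.sqrt (Real.log 2) := by
  have hk := key hn
  have h0 := theta_nonneg n
  have hc : (0 : ℝ) < Real.sqrt (Real.log 6) - Real.sqrt (Real.log 2) :=
    lt_of_lt_of_le (by norm_num) c_lb
  have hsq : Real.sqrt (θ n) ^ 2 = θ n := Real.sq_sqrt h0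
  have h1 : θ (n + 1) <
      (Real.sqrt (θ n) + (Real.sqrt (Real.log 6) - Real.sqrt (Real.log 2))) ^ 2 := by
    rw [theta_succ]
    nlinarith [hk, hsq]
  have h2 : Real.sqrt (θ (n + 1)) <
      Real.sqrt ((Real.sqrt (θ n) + (Real.sqrt (Real.log 6) - Real.sqrt (Real.log 2))) ^ 2) :=
    Real.sqrt_lt_sqrt (theta_nonneg (n + 1)) h1
  rw [Real.sqrt_sq (by positivity)] at h2
  linarith

end Stmt15Proof

theorem stmt15 : (∀ n : ℕ, 1 ≤ n →
      Real.sqrt (θ (n+1)) - Real.sqrt (θ n) ≤ Real.sqrt (Real.log 6) - Real.sqrt (Real.log 2)) ∧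
    (∀ n : ℕ, 1 ≤ n →
      (Real.sqrt (θ (n+1)) - Real.sqrt (θ n) = Real.sqrt (Real.log 6) - Real.sqrt (Real.log 2) ↔ n = 1)) := by
  constructor
  · intro n hn
    rcases eq_or_lt_of_le hn with h1 | h1
    · subst h1
      rw [show ((1:ℕ)+1) = 2 from rfl, Stmt15Proof.t1, Stmt15Proof.t2]
    · exact le_of_lt (Stmt15Proof.strict (by omega))
  · intro n hn
    constructor
    · intro heq
      by_contra hne
      have h2 : 2 ≤ n := by omega
      have := Stmt15Proof.strict h2
      rw [heq] at this
      exact lt_irrefl _ this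
    · rintro rfl
      rw [show ((1:ℕ)+1) = 2 from rfl, Stmt15Proof.t1, Stmt15Proof.t2]
end

section
/- θ-analogue of the Legendre conjecture: for every integer m ≥ 1 there exists n with m² < θ_n ≤ (m+1)², where θ_n = ∑_{i=1}^n ln(p_i). Equivalently, π_θ((m+1)²) > π_θ(m²), where π_θ(x) = #{i ≥ 1 : θ_i ≤ x}. -/
lemma two_le_nth (i : ℕ) : 2 ≤ Nat.nth Nat.Prime i :=
  (Nat.nth_mem_of_infinite Nat.infinite_setOf_prime i).two_le

lemma nth_succ_le (i : ℕ) : Nat.nth Nat.Prime (i + 1) ≤ 2 * Nat.nth Nat.Prime i := by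
  obtain ⟨r, hr, h1, h2⟩ := Nat.exists_prime_lt_and_le_two_mul (Nat.nth Nat.Prime i)
    (by have := two_le_nth i; omega)
  by_contra h
  push_neg at h
  have := Nat.le_nth_of_lt_nth_succ (lt_of_le_of_lt h2 h) hr
  omega

lemma nth_add_le (i j : ℕ) : Nat.nth Nat.Prime (i + j) ≤ 2 ^ j * Nat.nth Nat.Prime i := by
  induction j with
  | zero => simp
  | succ j ih =>
    calc Nat.nth Nat.Prime (i + j + 1) ≤ 2 * Nat.nth Nat.Prime (i + j) := nth_succ_le _
    _ ≤ 2 * (2 ^ j * Nat.nth Nat.Prime i) := by omega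
    _ = 2 ^ (j + 1) * Nat.nth Nat.Prime i := by ring

lemma θ_eq (n : ℕ) : θ n = ∑ i ∈ Finset.range n, Real.log (Nat.nth Nat.Prime i) := by
  rw [θ, ← Finset.Ico_add_one_right_eq_Icc, Finset.sum_Ico_eq_sum_range]
  simp [p]

lemma θ_succ (n : ℕ) : θ (n + 1) = θ n + Real.log (Nat.nth Nat.Prime n) := by
  rw [θ_eq, θ_eq, Finset.sum_range_succ]

lemma log_nth_ge (i : ℕ) : Real.log 2 ≤ Real.log (Nat.nth Nat.Prime i) :=
  Real.log_le_log (by norm_num) (by exact_mod_cast two_le_nth i)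

lemma θ_ge (n : ℕ) : (n : ℝ) * Real.log 2 ≤ θ n := by
  rw [θ_eq]
  calc (n : ℝ) * Real.log 2 = ∑ _i ∈ Finset.range n, Real.log 2 := by
        simp [mul_comm]
      _ ≤ _ := Finset.sum_le_sum fun i _ => log_nth_ge i

set_option maxHeartbeats 1000000 in
lemma key (n m : ℕ) (hn : 1 ≤ n) (hm : 1 ≤ m) (hθ : θ n ≤ (m : ℝ) ^ 2) :
    Real.log (Nat.nth Nat.Prime n) ≤ 2 * m + 1 := by
  by_contra h
  push_neg at h
  set L := Real.log (Nat.nth Nat.Prime n) with hL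
  set c := Real.log 2 with hc
  have hc0 : 0 < c := Real.log_pos (by norm_num)
  have hcu : c < 0.6932 := lt_trans Real.log_two_lt_d9 (by norm_num)
  have hm1 : (1 : ℝ) ≤ m := by exact_mod_cast hm
  have hL3 : (3 : ℝ) < L := by nlinarith
  -- L ≤ (n+1) * c
  have hLn : L ≤ (n + 1 : ℝ) * c := by
    have h1 : Nat.nth Nat.Prime n ≤ 2 ^ (n + 1) := by
      have := nth_add_le 0 n
      simp only [Nat.zero_add] at this
      calc Nat.nth Nat.Prime n ≤ 2 ^ n * Nat.nth Nat.Prime 0 := this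
      _ = 2 ^ (n + 1) := by rw [Nat.nth_prime_zero_eq_two]; ring
    calc L ≤ Real.log ((2 : ℝ) ^ (n + 1)) := by
            apply Real.log_le_log (by exact_mod_cast (two_le_nth n).trans_lt' (by norm_num))
            exact_mod_cast h1
      _ = (n + 1 : ℝ) * c := by rw [Real.log_pow]; push_cast; ring
  set k := ⌊L / c - 1⌋₊ with hk
  have hLc1 : (1 : ℝ) ≤ L / c := by
    rw [le_div_iff₀ hc0]; nlinarith
  have hkle : (k : ℝ) ≤ L / c - 1 := Nat.floor_le (by linarith)
  have hkgt : L / c - 2 < k := by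
    have := Nat.lt_floor_add_one (L / c - 1)
    linarith
  have hkn : k ≤ n := by
    have : (k : ℝ) ≤ n := by
      have : L / c - 1 ≤ n := by
        rw [sub_le_iff_le_add, div_le_iff₀ hc0]; linarith [hLn]
      linarith
    exact_mod_cast this
  -- each of the last k terms is at least L - (j+1) * c
  have hterm : ∀ j ∈ Finset.range k, L - (j + 1 : ℝ) * c
      ≤ Real.log (Nat.nth Nat.Prime (n - 1 - j)) := by
    intro j hj
    have hjk : j < k := Finset.mem_range.mp hj
    have hjn : j + 1 ≤ n := by omega
    have h1 : Nat.nth Nat.Prime n ≤ 2 ^ (j + 1) * Nat.nth Nat.Prime (n - 1 - j) := by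
      have := nth_add_le (n - 1 - j) (j + 1)
      have he : n - 1 - j + (j + 1) = n := by omega
      rwa [he] at this
    have h2 : L ≤ (j + 1 : ℝ) * c + Real.log (Nat.nth Nat.Prime (n - 1 - j)) := by
      calc L ≤ Real.log ((2 : ℝ) ^ (j + 1) * Nat.nth Nat.Prime (n - 1 - j)) := by
              apply Real.log_le_log
              · exact_mod_cast (two_le_nth n).trans_lt' (by norm_num)
              · exact_mod_cast h1
        _ = (j + 1 : ℝ) * c + Real.log (Nat.nth Nat.Prime (n - 1 - j)) := by
              rw [Real.log_mul (by positivity) (by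
                have := two_le_nth (n - 1 - j); positivity), Real.log_pow]
              push_cast; ring
    linarith
  -- θ n is at least the sum of the last k terms
  have hsub : (Finset.range k).image (fun j => n - 1 - j) ⊆ Finset.range n := by
    intro x hx
    simp only [Finset.mem_image, Finset.mem_range] at hx ⊢
    obtain ⟨j, hj, rfl⟩ := hx
    show n - 1 - j < n
    omega
  have hinj : Set.InjOn (fun j => n - 1 - j) (Finset.range k) := by
    intro a ha b hb hab
    simp only [Finset.coe_range, Set.mem_Iio] at ha hb
    have hab' : n - 1 - a = n - 1 - b := hab
    omega
  have himg : ∑ i ∈ (Finset.range k).image (fun j => n - 1 - j),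
      Real.log (Nat.nth Nat.Prime i)
      = ∑ j ∈ Finset.range k, Real.log (Nat.nth Nat.Prime (n - 1 - j)) :=
    Finset.sum_image (fun a ha b hb hab => hinj ha hb hab)
  have hθge : ∑ j ∈ Finset.range k, Real.log (Nat.nth Nat.Prime (n - 1 - j)) ≤ θ n := by
    rw [θ_eq, ← himg]
    apply Finset.sum_le_sum_of_subset_of_nonneg hsub
    intro i _ _
    have := log_nth_ge i
    linarith [hc0]
  have hgauss : ∀ K : ℕ, ∑ j ∈ Finset.range K, ((j : ℝ) + 1) = K * (K + 1) / 2 := by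
    intro K
    induction K with
    | zero => simp
    | succ K ih => rw [Finset.sum_range_succ, ih]; push_cast; ring
  have hgauss := hgauss k
  have hsum : k * L - c * (k * (k + 1) / 2) ≤ θ n := by
    calc (k : ℝ) * L - c * (k * (k + 1) / 2)
        = ∑ j ∈ Finset.range k, (L - (j + 1 : ℝ) * c) := by
          rw [Finset.sum_sub_distrib]
          simp only [Finset.sum_const, Finset.card_range, nsmul_eq_mul]
          rw [← Finset.sum_mul, hgauss]; ring
      _ ≤ ∑ j ∈ Finset.range k, Real.log (Nat.nth Nat.Prime (n - 1 - j)) :=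
          Finset.sum_le_sum hterm
      _ ≤ θ n := hθge
  -- conclude
  have hk1 : c * ((k : ℝ) + 1) ≤ L := by
    rw [← le_div_iff₀' hc0]; linarith
  have hkL : (k : ℝ) * L / 2 ≤ θ n := by nlinarith [Nat.cast_nonneg (α := ℝ) k]
  have hkgt' : L / c < (k : ℝ) + 2 := by linarith
  have hkc2 : L < ((k : ℝ) + 2) * c := (div_lt_iff₀ hc0).mp hkgt'
  have hL0 : (0 : ℝ) < L := by linarith
  have hfin2 : L * (L - 2 * c) < θ n * (2 * c) := by
    nlinarith [mul_lt_mul_of_pos_left (show L - 2 * c < (k : ℝ) * c by linarith) hL0,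
      mul_le_mul_of_nonneg_right hkL (by linarith : (0:ℝ) ≤ 2 * c)]
  have hmm : (1 : ℝ) ≤ (m : ℝ) ^ 2 := by nlinarith
  nlinarith [hfin2, hθ, hcu, hc0, hmm, hm1,
    mul_lt_mul_of_pos_right h (show (0:ℝ) < L - 2 * c by linarith),
    mul_lt_mul_of_pos_left h (show (0:ℝ) < 2 * (m:ℝ) + 1 by linarith),
    mul_le_mul_of_nonneg_left hθ (by linarith : (0:ℝ) ≤ 2 * c)]

theorem stmt16 : ∀ m : ℕ, 1 ≤ m → ∃ n : ℕ, 1 ≤ n ∧ (m : ℝ)^2 < θ n ∧ θ n ≤ ((m : ℝ) + 1)^2 := by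
  intro m hm
  classical
  have hm1 : (1 : ℝ) ≤ m := by exact_mod_cast hm
  have hc0 : (0 : ℝ) < Real.log 2 := Real.log_pos (by norm_num)
  have hcl : (0.6931 : ℝ) < Real.log 2 := lt_trans (by norm_num) Real.log_two_gt_d9
  set P : ℕ → Prop := fun n => θ n ≤ (m : ℝ) ^ 2 with hP
  have hP1 : P 1 := by
    show θ 1 ≤ (m : ℝ) ^ 2
    rw [θ_eq, Finset.sum_range_one, Nat.nth_prime_zero_eq_two]
    have h2 : ((2 : ℕ) : ℝ) = 2 := by norm_num
    rw [h2]
    nlinarith [Real.log_two_lt_d9, sq_nonneg ((m : ℝ) - 1)]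
  set N := Nat.findGreatest P (2 * m ^ 2) with hN
  have hb : 1 ≤ 2 * m ^ 2 := by nlinarith
  have hN1 : 1 ≤ N := Nat.le_findGreatest hb hP1
  have hNspec : P N := Nat.findGreatest_spec hb hP1
  have hNsucc : ¬ P (N + 1) := by
    by_cases hcase : N + 1 ≤ 2 * m ^ 2
    · exact Nat.findGreatest_is_greatest (Nat.lt_succ_self N) hcase
    · -- N + 1 > 2 m², so θ (N+1) > m²
      intro hcon
      have hlarge : (2 * m ^ 2 + 1 : ℝ) ≤ (N + 1 : ℝ) := by
        have : 2 * m ^ 2 + 1 ≤ N + 1 := by omega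
        exact_mod_cast this
      have := θ_ge (N + 1)
      push_cast at this hlarge
      simp only [hP] at hcon
      nlinarith
  refine ⟨N + 1, by omega, ?_, ?_⟩
  · simp only [hP] at hNsucc; push_neg at hNsucc; exact hNsucc
  · have hkey := key N m hN1 hm hNspec
    rw [θ_succ]
    simp only [hP] at hNspec
    nlinarith
end
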